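/- arXiv:1404.0629 — 6 statements merged into one kernel-verified Lean document; each statement's English description precedes it below -/
import Mathlib

section
/- Let K, H, H̃ be groups, γ : K → H and τ : H → H̃ homomorphisms, and let τ̃ = τ ∘ γ. Assume that the commutator subgroup [H,H] is contained in the image of γ and that the center Z(H) is contained in the image of γ. If τ̃ is injective, then τ is injective. -/
theorem stmt_0 {K H H' : Type*} [Group K] [Group H] [Group H']
    (γ : K →* H) (τ : H →* H') (τ' : K →* H') (hτ' : τ' = τ.comp γ)
    (hcomm : commutator H ≤ γ.range) (hcent : Subgroup.center H ≤ γ.range)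
    (hinj : Function.Injective τ') : Function.Injective τ := by
  rw [injective_iff_map_eq_one] at hinj ⊢
  intro h hh
  have hcen : h ∈ Subgroup.center H := by
    rw [Subgroup.mem_center_iff]
    intro x
    have : (open scoped commutatorElement in ⁅h, x⁆) ∈ commutator H :=
      Subgroup.commutator_mem_commutator (Subgroup.mem_top _) (Subgroup.mem_top _)
    obtain ⟨k, hk⟩ := hcomm this
    have hk1 : τ' k = 1 := by
      rw [hτ']
      simp only [MonoidHom.comp_apply, hk]
      simp [commutatorElement_def, hh]
    have := hinj k hk1
    rw [this, map_one] at hk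
    have hc : Commute h x := commutatorElement_eq_one_iff_commute.mp hk.symm
    exact hc.symm.eq
  obtain ⟨k, hk⟩ := hcent hcen
  have hk1 : τ' k = 1 := by
    rw [hτ']
    simp [MonoidHom.comp_apply, hk, hh]
  have := hinj k hk1
  rw [this, map_one] at hk
  exact hk.symm
end

section
/- Let K, H, H̃ be groups, γ : K → H an injective homomorphism, τ : H → H̃ a homomorphism, and τ̃ = τ ∘ γ. Assume [H,H] ⊆ im γ and Z(H) ⊆ im γ. Then τ̃ is injective if and only if τ is injective. -/
open scoped commutatorElement in
theorem stmt_1 {K H H' : Type*} [Group K] [Group H] [Group H']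
    (γ : K →* H) (hγ : Function.Injective γ)
    (τ : H →* H') (τ' : K →* H') (hτ' : τ' = τ.comp γ)
    (hcomm : commutator H ≤ γ.range) (hcent : Subgroup.center H ≤ γ.range) :
    Function.Injective τ' ↔ Function.Injective τ := by
  subst hτ'
  constructor
  · intro hinj
    rw [injective_iff_map_eq_one] at hinj ⊢
    intro n hn
    have key : ∀ x ∈ γ.range, τ x = 1 → x = 1 := by
      rintro x ⟨k, rfl⟩ hx
      rw [hinj k hx]; simp
    have hc : ∀ h : H, n * h = h * n := by
      intro h
      have hmem : ⁅n, h⁆ ∈ γ.range :=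
        hcomm (Subgroup.commutator_mem_commutator (Subgroup.mem_top n) (Subgroup.mem_top h))
      have h1 : ⁅n, h⁆ = 1 :=
        key _ hmem (by simp [commutatorElement_def, map_mul, map_inv, hn])
      exact commutatorElement_eq_one_iff_mul_comm.mp h1
    have hcen : n ∈ Subgroup.center H :=
      Subgroup.mem_center_iff.mpr fun g => (hc g).symm
    exact key n (hcent hcen) hn
  · intro hinj
    exact hinj.comp hγ
end

section
/- Let G be the group with presentation: generators σ, ζ, a₁, b₁, …, a_g, b_g (g ≥ 1); relations: all pairs of generators commute except the pairs {a_i, b_i}, and [a_i, b_i] = σ² for each i. Then the center of G is the subgroup generated by σ and ζ, and this subgroup is free abelian of rank 2. -/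
open scoped commutatorElement
open scoped IsMulCommutative

/-- Generators: `σ`, `ζ`, and `aᵢ`, `bᵢ` for `i = 1, …, g`. -/
inductive Gen8 (g : ℕ)
  | sigma : Gen8 g
  | zeta : Gen8 g
  | a : Fin g → Gen8 g
  | b : Fin g → Gen8 g

/-- `x` and `y` form an exceptional pair `{aᵢ, bᵢ}`. -/
def Gen8.exceptional {g : ℕ} (x y : Gen8 g) : Prop :=
  ∃ i : Fin g, (x = .a i ∧ y = .b i) ∨ (x = .b i ∧ y = .a i)

/-- The defining relators: all pairs of distinct generators commute except the
pairs `{aᵢ, bᵢ}`, and `[aᵢ, bᵢ] = σ²`. -/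
def rels8 (g : ℕ) : Set (FreeGroup (Gen8 g)) :=
  { r | ∃ x y : Gen8 g, x ≠ y ∧ ¬ Gen8.exceptional x y ∧
      r = ⁅FreeGroup.of x, FreeGroup.of y⁆ } ∪
  { r | ∃ i : Fin g,
      r = ⁅FreeGroup.of (Gen8.a i), FreeGroup.of (Gen8.b i)⁆ *
            (FreeGroup.of (Gen8.sigma (g := g)) ^ 2)⁻¹ }

@[ext] structure Hei (g : ℕ) where
  s : ℤ
  z : ℤ
  p : Fin g → ℤ
  q : Fin g → ℤ

namespace Hei
variable {g : ℕ}

instance : Mul (Hei g) :=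
  ⟨fun x y => ⟨x.s + y.s - 2 * ∑ i, x.q i * y.p i, x.z + y.z, x.p + y.p, x.q + y.q⟩⟩
instance : One (Hei g) := ⟨⟨0, 0, 0, 0⟩⟩
instance : Inv (Hei g) := ⟨fun x => ⟨-x.s - 2 * ∑ i, x.q i * x.p i, -x.z, -x.p, -x.q⟩⟩

@[simp] lemma mul_s (x y : Hei g) : (x * y).s = x.s + y.s - 2 * ∑ i, x.q i * y.p i := rfl
@[simp] lemma mul_z (x y : Hei g) : (x * y).z = x.z + y.z := rfl
@[simp] lemma mul_p (x y : Hei g) : (x * y).p = x.p + y.p := rfl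
@[simp] lemma mul_q (x y : Hei g) : (x * y).q = x.q + y.q := rfl
@[simp] lemma one_s : (1 : Hei g).s = 0 := rfl
@[simp] lemma one_z : (1 : Hei g).z = 0 := rfl
@[simp] lemma one_p : (1 : Hei g).p = 0 := rfl
@[simp] lemma one_q : (1 : Hei g).q = 0 := rfl
@[simp] lemma inv_p (x : Hei g) : (x⁻¹).p = -x.p := rfl
@[simp] lemma inv_q (x : Hei g) : (x⁻¹).q = -x.q := rfl
@[simp] lemma inv_z (x : Hei g) : (x⁻¹).z = -x.z := rfl
@[simp] lemma inv_s (x : Hei g) : (x⁻¹).s = -x.s - 2 * ∑ i, x.q i * x.p i := rfl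

instance : Group (Hei g) where
  mul_assoc x y z := by
    ext <;> simp [Pi.add_apply, add_mul, mul_add, Finset.sum_add_distrib] <;> ring
  one_mul x := by ext <;> simp
  mul_one x := by ext <;> simp
  inv_mul_cancel x := by
    ext <;> simp [Finset.sum_add_distrib, neg_mul, add_comm, Finset.sum_neg_distrib] <;> ring

lemma commute_of_dot {x y : Hei g} (h : ∑ i, x.q i * y.p i = ∑ i, y.q i * x.p i) :
    Commute x y := by
  show x * y = y * x
  ext <;> simp [h, add_comm]

end Hei

namespace Stmt8
variable {g : ℕ}

def fgen : Gen8 g → Hei g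
  | .sigma => ⟨1, 0, 0, 0⟩
  | .zeta => ⟨0, 1, 0, 0⟩
  | .a i => ⟨0, 0, Pi.single i 1, 0⟩
  | .b i => ⟨0, 0, 0, Pi.single i 1⟩

lemma dot_single (i j : Fin g) :
    ∑ k : Fin g, (Pi.single i 1 : Fin g → ℤ) k * (Pi.single j 1 : Fin g → ℤ) k
      = if i = j then 1 else 0 := by
  by_cases h : i = j
  · subst h; simp [Pi.single_apply]
  · simp [Pi.single_apply, Finset.sum_ite_eq', mul_ite, ite_and, h, Ne.symm h]

lemma fgen_comm {x y : Gen8 g} (hne : x ≠ y) (hexc : ¬ Gen8.exceptional x y) :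
    Commute (fgen x) (fgen y) := by
  apply Hei.commute_of_dot
  cases x <;> cases y <;> simp [fgen, dot_single]
  · rename_i i j
    intro hij
    exact hexc ⟨i, Or.inl ⟨rfl, by rw [hij]⟩⟩
  · rename_i i j
    intro hij
    exact hexc ⟨j, Or.inr ⟨by rw [hij], rfl⟩⟩

lemma fgen_ab (i : Fin g) :
    ⁅fgen (Gen8.a i), fgen (Gen8.b i)⁆ = (fgen (Gen8.sigma (g := g)))^2 := by
  rw [commutatorElement_def]
  ext <;> simp [fgen, pow_two, dot_single, Pi.single_apply]

lemma hrels : ∀ r ∈ rels8 g, FreeGroup.lift fgen r = 1 := by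
  rintro r (⟨x, y, hne, hexc, rfl⟩ | ⟨i, rfl⟩)
  · rw [map_commutatorElement]
    simp only [FreeGroup.lift_apply_of]
    exact commutatorElement_eq_one_iff_commute.mpr (fgen_comm hne hexc)
  · rw [map_mul, map_inv, map_pow, map_commutatorElement]
    simp only [FreeGroup.lift_apply_of]
    rw [fgen_ab, mul_inv_cancel]

def φ : PresentedGroup (rels8 g) →* Hei g := PresentedGroup.toGroup hrels

@[simp] lemma φ_of (x : Gen8 g) : φ (PresentedGroup.of (rels := rels8 g) x) = fgen x :=
  PresentedGroup.toGroup.of hrels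

/-- central part hom -/
def ι : Multiplicative (ℤ × ℤ) →* Hei g where
  toFun x := ⟨x.toAdd.1, x.toAdd.2, 0, 0⟩
  map_one' := by ext <;> rfl
  map_mul' x y := by ext <;> simp

lemma hei_pow (m n : ℤ) :
    (⟨1,0,0,0⟩ : Hei g) ^ m * (⟨0,1,0,0⟩ : Hei g) ^ n = ⟨m, n, 0, 0⟩ := by
  have h1 : (⟨1,0,0,0⟩ : Hei g) = ι (Multiplicative.ofAdd ((1:ℤ), (0:ℤ))) := by ext <;> rfl
  have h2 : (⟨0,1,0,0⟩ : Hei g) = ι (Multiplicative.ofAdd ((0:ℤ), (1:ℤ))) := by ext <;> rfl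
  rw [h1, h2, ← map_zpow (ι (g := g)), ← map_zpow (ι (g := g)), ← map_mul]
  ext <;> simp [ι]

open PresentedGroup Subgroup

/-- shorthand -/
abbrev Gg (g : ℕ) := PresentedGroup (rels8 g)

def C (g : ℕ) : Subgroup (Gg g) :=
  Subgroup.closure {PresentedGroup.of Gen8.sigma, PresentedGroup.of Gen8.zeta}

lemma rel_mk {r : FreeGroup (Gen8 g)} (hr : r ∈ rels8 g) :
    PresentedGroup.mk (rels8 g) r = 1 :=
  (QuotientGroup.eq_one_iff _).mpr (Subgroup.subset_normalClosure hr)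

lemma comm_gen {x y : Gen8 g} (hne : x ≠ y) (hexc : ¬ x.exceptional y) :
    Commute (PresentedGroup.of (rels := rels8 g) x) (PresentedGroup.of y) := by
  have h := rel_mk (g := g) (Or.inl ⟨x, y, hne, hexc, rfl⟩)
  rw [map_commutatorElement] at h
  exact commutatorElement_eq_one_iff_commute.mp h

lemma ab_rel (i : Fin g) :
    ⁅(PresentedGroup.of (Gen8.a i) : Gg g), PresentedGroup.of (Gen8.b i)⁆ =
      (PresentedGroup.of (Gen8.sigma) : Gg g) ^ 2 := by
  have h := rel_mk (g := g) (Or.inr ⟨i, rfl⟩)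
  rw [map_mul, map_inv, map_pow, map_commutatorElement, mul_inv_eq_one] at h
  exact h

lemma not_exc_sigma (y : Gen8 g) : ¬ (Gen8.sigma (g := g)).exceptional y := by
  rintro ⟨i, ⟨h1, h2⟩ | ⟨h1, h2⟩⟩ <;> simp at h1

lemma not_exc_zeta (y : Gen8 g) : ¬ (Gen8.zeta (g := g)).exceptional y := by
  rintro ⟨i, ⟨h1, h2⟩ | ⟨h1, h2⟩⟩ <;> simp at h1

lemma sigma_mem_center : (PresentedGroup.of Gen8.sigma : Gg g) ∈ Subgroup.center (Gg g) := by
  rw [Subgroup.mem_center_iff]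
  intro w
  have hw : w ∈ Subgroup.centralizer {(PresentedGroup.of Gen8.sigma : Gg g)} := by
    refine PresentedGroup.generated_by _ _ (fun j => ?_) w
    rw [Subgroup.mem_centralizer_singleton_iff]
    rcases eq_or_ne (Gen8.sigma (g := g)) j with rfl | hne
    · rfl
    · exact (comm_gen hne (not_exc_sigma j)).symm.eq
  exact Subgroup.mem_centralizer_singleton_iff.mp hw

lemma zeta_mem_center : (PresentedGroup.of Gen8.zeta : Gg g) ∈ Subgroup.center (Gg g) := by
  rw [Subgroup.mem_center_iff]
  intro w
  have hw : w ∈ Subgroup.centralizer {(PresentedGroup.of Gen8.zeta : Gg g)} := by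
    refine PresentedGroup.generated_by _ _ (fun j => ?_) w
    rw [Subgroup.mem_centralizer_singleton_iff]
    rcases eq_or_ne (Gen8.zeta (g := g)) j with rfl | hne
    · rfl
    · exact (comm_gen hne (not_exc_zeta j)).symm.eq
  exact Subgroup.mem_centralizer_singleton_iff.mp hw

lemma C_le_center : C g ≤ Subgroup.center (Gg g) := by
  rw [C, Subgroup.closure_le]
  rintro x (rfl | h)
  · exact sigma_mem_center
  · rw [Set.mem_singleton_iff] at h; subst h; exact zeta_mem_center

lemma hcent {c : Gg g} (hc : c ∈ C g) : ∀ u : Gg g, c * u = u * c := fun u =>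
  (Subgroup.mem_center_iff.mp (C_le_center hc) u).symm

/-- Elements that commute with `w` up to a central correction in `C g`. -/
def T (w : Gg g) : Subgroup (Gg g) where
  carrier := {x | ∃ c ∈ C g, x * w = c * (w * x)}
  one_mem' := ⟨1, one_mem _, by simp⟩
  mul_mem' := by
    rintro x y ⟨cx, hcx, hx⟩ ⟨cy, hcy, hy⟩
    refine ⟨cy * cx, mul_mem hcy hcx, ?_⟩
    calc x * y * w = x * (cy * (w * y)) := by rw [mul_assoc, hy]
      _ = (x * cy) * (w * y) := by rw [mul_assoc]
      _ = (cy * x) * (w * y) := by rw [← hcent hcy x]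
      _ = cy * ((x * w) * y) := by simp only [mul_assoc]
      _ = cy * ((cx * (w * x)) * y) := by rw [hx]
      _ = cy * cx * (w * (x * y)) := by simp only [mul_assoc]
  inv_mem' := by
    rintro x ⟨c, hc, hx⟩
    refine ⟨c⁻¹, inv_mem hc, ?_⟩
    have l : x * (c * (x⁻¹ * w)) = c * w := by
      rw [← mul_assoc, ← hcent hc x, mul_assoc, ← mul_assoc x x⁻¹ w, mul_inv_cancel, one_mul]
    have r : x * (w * x⁻¹) = c * w := by
      rw [← mul_assoc, hx, mul_assoc, mul_assoc, mul_inv_cancel, mul_one]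
    exact eq_inv_mul_iff_mul_eq.mpr (mul_left_cancel (l.trans r.symm))

lemma mem_T {w x : Gg g} : x ∈ T w ↔ ∃ c ∈ C g, x * w = c * (w * x) := Iff.rfl

lemma mem_T_of_commute {x w : Gg g} (h : Commute x w) : x ∈ T w :=
  ⟨1, one_mem _, by rw [one_mul, h.eq]⟩

lemma mem_T_inv {x w : Gg g} (h : x ∈ T w) : x ∈ T w⁻¹ := by
  obtain ⟨c, hc, hx⟩ := h
  refine ⟨c⁻¹, inv_mem hc, ?_⟩
  have l : w * (c⁻¹ * (w⁻¹ * x)) = c⁻¹ * x := by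
    rw [← mul_assoc, ← hcent (inv_mem hc) w, mul_assoc, ← mul_assoc w w⁻¹ x,
      mul_inv_cancel, one_mul]
  have r : w * (x * w⁻¹) = c⁻¹ * x := by
    have hwx : w * x = c⁻¹ * (x * w) := by
      rw [eq_inv_mul_iff_mul_eq, ← hx]
    rw [← mul_assoc, hwx, mul_assoc, mul_assoc, mul_inv_cancel, mul_one]
  exact mul_left_cancel (r.trans l.symm)

lemma commute_of_center {z : Gg g} (hz : z ∈ Subgroup.center (Gg g)) (w : Gg g) :
    Commute z w := (Subgroup.mem_center_iff.mp hz w).symm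

lemma sigma_mem_C : (PresentedGroup.of Gen8.sigma : Gg g) ∈ C g :=
  Subgroup.subset_closure (by simp)

lemma zeta_mem_C : (PresentedGroup.of Gen8.zeta : Gg g) ∈ C g :=
  Subgroup.subset_closure (by simp)

lemma swap_a (i : Fin g) (x : Gg g) : x ∈ T (PresentedGroup.of (Gen8.a i)) := by
  refine PresentedGroup.generated_by _ _ (fun t => ?_) x
  cases t with
  | sigma => exact mem_T_of_commute (commute_of_center sigma_mem_center _)
  | zeta => exact mem_T_of_commute (commute_of_center zeta_mem_center _)
  | a j =>
    rcases eq_or_ne j i with rfl | hne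
    · exact mem_T_of_commute (Commute.refl _)
    · refine mem_T_of_commute (comm_gen (fun h => hne (by injection h)) ?_)
      rintro ⟨k, ⟨h1, h2⟩ | ⟨h1, h2⟩⟩ <;> simp_all
  | b j =>
    rcases eq_or_ne j i with rfl | hne
    · refine ⟨((PresentedGroup.of Gen8.sigma : Gg g) ^ 2)⁻¹,
        inv_mem (pow_mem sigma_mem_C 2), ?_⟩
      have h := ab_rel (g := g) j
      rw [commutatorElement_def] at h
      rw [← h]
      group
    · refine mem_T_of_commute (comm_gen (by simp) ?_)
      rintro ⟨k, ⟨h1, h2⟩ | ⟨h1, h2⟩⟩ <;> simp_all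

def Pa (g : ℕ) : Subgroup (Gg g) :=
  Subgroup.closure (Set.range fun i => (PresentedGroup.of (Gen8.a i) : Gg g))

def Qb (g : ℕ) : Subgroup (Gg g) :=
  Subgroup.closure (Set.range fun i => (PresentedGroup.of (Gen8.b i) : Gg g))

lemma pa_comm {x y : Gg g} (hx : x ∈ Pa g) (hy : y ∈ Pa g) : Commute x y := by
  induction hx, hy using Subgroup.closure_induction₂ with
  | mem x y hx hy =>
    obtain ⟨i, rfl⟩ := hx
    obtain ⟨j, rfl⟩ := hy
    rcases eq_or_ne i j with rfl | hne
    · exact Commute.refl _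
    · refine comm_gen (fun h => hne (by injection h)) ?_
      rintro ⟨k, ⟨h1, h2⟩ | ⟨h1, h2⟩⟩ <;> simp_all
  | one_left x hx => exact Commute.one_left x
  | one_right x hx => exact Commute.one_right x
  | mul_left x y z _ _ _ h1 h2 => exact h1.mul_left h2
  | mul_right y z x _ _ _ h1 h2 => exact h1.mul_right h2
  | inv_left x y _ _ h => exact h.inv_left
  | inv_right x y _ _ h => exact h.inv_right

lemma qb_comm {x y : Gg g} (hx : x ∈ Qb g) (hy : y ∈ Qb g) : Commute x y := by
  induction hx, hy using Subgroup.closure_induction₂ with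
  | mem x y hx hy =>
    obtain ⟨i, rfl⟩ := hx
    obtain ⟨j, rfl⟩ := hy
    rcases eq_or_ne i j with rfl | hne
    · exact Commute.refl _
    · refine comm_gen (fun h => hne (by injection h)) ?_
      rintro ⟨k, ⟨h1, h2⟩ | ⟨h1, h2⟩⟩ <;> simp_all
  | one_left x hx => exact Commute.one_left x
  | one_right x hx => exact Commute.one_right x
  | mul_left x y z _ _ _ h1 h2 => exact h1.mul_left h2
  | mul_right y z x _ _ _ h1 h2 => exact h1.mul_right h2
  | inv_left x y _ _ h => exact h.inv_left
  | inv_right x y _ _ h => exact h.inv_right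

instance : IsMulCommutative (Pa g) := ⟨⟨fun x y => Subtype.ext (pa_comm x.2 y.2)⟩⟩
instance : IsMulCommutative (Qb g) := ⟨⟨fun x y => Subtype.ext (qb_comm x.2 y.2)⟩⟩

def aA (i : Fin g) : Pa g :=
  ⟨PresentedGroup.of (Gen8.a i), Subgroup.subset_closure ⟨i, rfl⟩⟩
def bB (i : Fin g) : Qb g :=
  ⟨PresentedGroup.of (Gen8.b i), Subgroup.subset_closure ⟨i, rfl⟩⟩

def Amap (p : Fin g → ℤ) : Gg g := ((∏ i, aA i ^ p i : Pa g) : Gg g)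
def Bmap (q : Fin g → ℤ) : Gg g := ((∏ i, bB i ^ q i : Qb g) : Gg g)

lemma Amap_zero : Amap (g := g) 0 = 1 := by simp [Amap]
lemma Bmap_zero : Bmap (g := g) 0 = 1 := by simp [Bmap]

lemma prod_pow_absorb {H : Subgroup (Gg g)} [IsMulCommutative H] (f : Fin g → H)
    (p : Fin g → ℤ) (i : Fin g) (e : ℤ) :
    (∏ j, f j ^ p j) * f i ^ e = ∏ j, f j ^ ((p + Pi.single i e : Fin g → ℤ)) j := by
  have h1 : ∀ j : Fin g, f j ^ ((p + Pi.single i e : Fin g → ℤ)) j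
      = f j ^ p j * f j ^ ((Pi.single i e : Fin g → ℤ)) j := by
    intro j; rw [Pi.add_apply, zpow_add]
  rw [Finset.prod_congr rfl (fun j _ => h1 j), Finset.prod_mul_distrib]
  congr 1
  rw [Finset.prod_eq_single i (fun j _ hj => by rw [Pi.single_eq_of_ne hj, zpow_zero]) (by simp),
    Pi.single_eq_same]

lemma Amap_absorb (p : Fin g → ℤ) (i : Fin g) (e : ℤ) :
    Amap p * (PresentedGroup.of (Gen8.a i) : Gg g) ^ e = Amap (p + Pi.single i e) := by
  show ((∏ j, aA j ^ p j : Pa g) : Gg g) * ((aA i : Pa g) : Gg g) ^ e = _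
  rw [← SubgroupClass.coe_zpow, ← Subgroup.coe_mul, prod_pow_absorb]
  rfl

lemma Bmap_absorb (q : Fin g → ℤ) (i : Fin g) (e : ℤ) :
    Bmap q * (PresentedGroup.of (Gen8.b i) : Gg g) ^ e = Bmap (q + Pi.single i e) := by
  show ((∏ j, bB j ^ q j : Qb g) : Gg g) * ((bB i : Qb g) : Gg g) ^ e = _
  rw [← SubgroupClass.coe_zpow, ← Subgroup.coe_mul, prod_pow_absorb]
  rfl


lemma step_central {c w : Gg g} (hw : w ∈ C g) (u : Gg g) :
    c * u * w = (c * w) * u := by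
  rw [mul_assoc, ← hcent hw u, ← mul_assoc]

lemma step_swap {c c' : Gg g} (hc' : c' ∈ C g) {u v w : Gg g}
    (hswap : v * w = c' * (w * v)) :
    c * (u * v) * w = (c * c') * ((u * w) * v) := by
  calc c * (u * v) * w = c * (u * (v * w)) := by simp only [mul_assoc]
    _ = c * (u * (c' * (w * v))) := by rw [hswap]
    _ = c * ((u * c') * (w * v)) := by simp only [mul_assoc]
    _ = c * ((c' * u) * (w * v)) := by rw [← hcent hc' u]
    _ = (c * c') * ((u * w) * v) := by simp only [mul_assoc]

lemma normal_form (x : Gg g) : ∃ c ∈ C g, ∃ p q, x = c * (Amap p * Bmap q) := by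
  have hx : x ∈ Subgroup.closure (Set.range (PresentedGroup.of : Gen8 g → Gg g)) := by
    rw [PresentedGroup.closure_range_of]; trivial
  induction hx using Subgroup.closure_induction_right with
  | one => exact ⟨1, one_mem _, 0, 0, by rw [Amap_zero, Bmap_zero, mul_one, mul_one]⟩
  | mul_right x hx y hy ih =>
    obtain ⟨t, rfl⟩ := hy
    obtain ⟨c, hc, p, q, rfl⟩ := ih
    cases t with
    | sigma =>
      exact ⟨c * _, mul_mem hc sigma_mem_C, p, q, step_central sigma_mem_C _⟩
    | zeta =>
      exact ⟨c * _, mul_mem hc zeta_mem_C, p, q, step_central zeta_mem_C _⟩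
    | a i =>
      obtain ⟨c', hc', hswap⟩ := swap_a i (Bmap q)
      refine ⟨c * c', mul_mem hc hc', p + Pi.single i 1, q, ?_⟩
      rw [step_swap hc' hswap, ← zpow_one (PresentedGroup.of (Gen8.a i) : Gg g), Amap_absorb]
    | b i =>
      refine ⟨c, hc, p, q + Pi.single i 1, ?_⟩
      rw [mul_assoc, mul_assoc, ← zpow_one (PresentedGroup.of (Gen8.b i) : Gg g), Bmap_absorb,
        ← mul_assoc]
  | mul_inv_cancel x hx y hy ih =>
    obtain ⟨t, rfl⟩ := hy
    obtain ⟨c, hc, p, q, rfl⟩ := ih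
    cases t with
    | sigma =>
      exact ⟨c * _, mul_mem hc (inv_mem sigma_mem_C), p, q,
        step_central (inv_mem sigma_mem_C) _⟩
    | zeta =>
      exact ⟨c * _, mul_mem hc (inv_mem zeta_mem_C), p, q,
        step_central (inv_mem zeta_mem_C) _⟩
    | a i =>
      obtain ⟨c', hc', hswap⟩ := mem_T_inv (swap_a i (Bmap q))
      refine ⟨c * c', mul_mem hc hc', p + Pi.single i (-1), q, ?_⟩
      rw [step_swap hc' hswap, ← zpow_neg_one (PresentedGroup.of (Gen8.a i) : Gg g), Amap_absorb]
    | b i =>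
      refine ⟨c, hc, p, q + Pi.single i (-1), ?_⟩
      rw [mul_assoc, mul_assoc, ← zpow_neg_one (PresentedGroup.of (Gen8.b i) : Gg g), Bmap_absorb,
        ← mul_assoc]

def phom : Hei g →* Multiplicative (Fin g → ℤ) where
  toFun x := Multiplicative.ofAdd x.p
  map_one' := rfl
  map_mul' x y := rfl

def qhom : Hei g →* Multiplicative (Fin g → ℤ) where
  toFun x := Multiplicative.ofAdd x.q
  map_one' := rfl
  map_mul' x y := rfl

lemma phom_C {c : Gg g} (hc : c ∈ C g) : phom (φ c) = 1 := by
  have hle : C g ≤ (phom.comp φ).ker := by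
    rw [C, Subgroup.closure_le]
    rintro x (rfl | hx)
    · show phom (φ _) = 1
      rw [φ_of]; rfl
    · rw [Set.mem_singleton_iff] at hx; subst hx
      show phom (φ _) = 1
      rw [φ_of]; rfl
  exact hle hc

lemma qhom_C {c : Gg g} (hc : c ∈ C g) : qhom (φ c) = 1 := by
  have hle : C g ≤ (qhom.comp φ).ker := by
    rw [C, Subgroup.closure_le]
    rintro x (rfl | hx)
    · show qhom (φ _) = 1
      rw [φ_of]; rfl
    · rw [Set.mem_singleton_iff] at hx; subst hx
      show qhom (φ _) = 1
      rw [φ_of]; rfl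
  exact hle hc

lemma phom_Amap (p : Fin g → ℤ) : phom (φ (Amap p)) = Multiplicative.ofAdd p := by
  have key : (phom.comp (φ.comp (Pa g).subtype)) (∏ j, aA j ^ p j)
      = Multiplicative.ofAdd p := by
    rw [map_prod]
    have h1 : ∀ j : Fin g, (phom.comp (φ.comp (Pa g).subtype)) (aA j ^ p j)
        = Multiplicative.ofAdd (Pi.single j (p j)) := by
      intro j
      rw [map_zpow]
      have : (phom.comp (φ.comp (Pa g).subtype)) (aA j)
          = Multiplicative.ofAdd (Pi.single j (1:ℤ)) := by
        show phom (φ (PresentedGroup.of (Gen8.a j))) = _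
        rw [φ_of]; rfl
      rw [this, ← ofAdd_zsmul]
      congr 1
      funext k
      by_cases hk : k = j
      · subst hk; simp
      · simp [Pi.single_eq_of_ne hk]
    rw [Finset.prod_congr rfl (fun j _ => h1 j), ← ofAdd_sum, Finset.univ_sum_single]
  exact key

lemma qhom_Amap (p : Fin g → ℤ) : qhom (φ (Amap p)) = 1 := by
  have key : (qhom.comp (φ.comp (Pa g).subtype)) (∏ j, aA j ^ p j) = 1 := by
    rw [map_prod]
    apply Finset.prod_eq_one
    intro j _
    rw [map_zpow]
    have : (qhom.comp (φ.comp (Pa g).subtype)) (aA j) = 1 := by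
      show qhom (φ (PresentedGroup.of (Gen8.a j))) = _
      rw [φ_of]; rfl
    rw [this, one_zpow]
  exact key

lemma qhom_Bmap (q : Fin g → ℤ) : qhom (φ (Bmap q)) = Multiplicative.ofAdd q := by
  have key : (qhom.comp (φ.comp (Qb g).subtype)) (∏ j, bB j ^ q j)
      = Multiplicative.ofAdd q := by
    rw [map_prod]
    have h1 : ∀ j : Fin g, (qhom.comp (φ.comp (Qb g).subtype)) (bB j ^ q j)
        = Multiplicative.ofAdd (Pi.single j (q j)) := by
      intro j
      rw [map_zpow]
      have : (qhom.comp (φ.comp (Qb g).subtype)) (bB j)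
          = Multiplicative.ofAdd (Pi.single j (1:ℤ)) := by
        show qhom (φ (PresentedGroup.of (Gen8.b j))) = _
        rw [φ_of]; rfl
      rw [this, ← ofAdd_zsmul]
      congr 1
      funext k
      by_cases hk : k = j
      · subst hk; simp
      · simp [Pi.single_eq_of_ne hk]
    rw [Finset.prod_congr rfl (fun j _ => h1 j), ← ofAdd_sum, Finset.univ_sum_single]
  exact key

lemma phom_Bmap (q : Fin g → ℤ) : phom (φ (Bmap q)) = 1 := by
  have key : (phom.comp (φ.comp (Qb g).subtype)) (∏ j, bB j ^ q j) = 1 := by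
    rw [map_prod]
    apply Finset.prod_eq_one
    intro j _
    rw [map_zpow]
    have : (phom.comp (φ.comp (Qb g).subtype)) (bB j) = 1 := by
      show phom (φ (PresentedGroup.of (Gen8.b j))) = _
      rw [φ_of]; rfl
    rw [this, one_zpow]
  exact key

lemma single_dot (i : Fin g) (v : Fin g → ℤ) :
    ∑ k : Fin g, (Pi.single i 1 : Fin g → ℤ) k * v k = v i := by
  simp [Pi.single_apply, ite_mul]

lemma dot_single_r (i : Fin g) (v : Fin g → ℤ) :
    ∑ k : Fin g, v k * (Pi.single i 1 : Fin g → ℤ) k = v i := by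
  simp [Pi.single_apply, mul_ite]

lemma center_le_C : Subgroup.center (Gg g) ≤ C g := by
  intro x hx
  obtain ⟨c, hc, p, q, hxe⟩ := normal_form x
  have hXp : (φ x).p = p := by
    have h1 : phom (φ x) = Multiplicative.ofAdd p := by
      simp only [hxe, map_mul, phom_C hc, phom_Amap, phom_Bmap, one_mul, mul_one]
    exact congrArg Multiplicative.toAdd h1
  have hXq : (φ x).q = q := by
    have h1 : qhom (φ x) = Multiplicative.ofAdd q := by
      simp only [hxe, map_mul, qhom_C hc, qhom_Amap, qhom_Bmap, one_mul, mul_one]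
    exact congrArg Multiplicative.toAdd h1
  have hp0 : p = 0 := by
    funext i
    have h := Subgroup.mem_center_iff.mp hx (PresentedGroup.of (Gen8.b i))
    have h2 := congrArg (fun t => (φ t).s) h
    simp only [map_mul, φ_of] at h2
    have h3 : (fgen (Gen8.b i) * φ x).s = (φ x * fgen (Gen8.b i)).s := h2
    rw [Hei.mul_s, Hei.mul_s] at h3
    have h4 : ∑ k : Fin g, (fgen (Gen8.b i : Gen8 g)).q k * (φ x).p k = (φ x).p i := by
      show ∑ k : Fin g, (Pi.single i 1 : Fin g → ℤ) k * (φ x).p k = _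
      exact single_dot i _
    have h5 : ∑ k : Fin g, (φ x).q k * (fgen (Gen8.b i : Gen8 g)).p k = 0 := by
      show ∑ k : Fin g, (φ x).q k * (0 : Fin g → ℤ) k = 0
      simp
    rw [h4, h5] at h3
    have h6 : (fgen (Gen8.b i : Gen8 g)).s = 0 := rfl
    rw [hXp] at h3
    rw [h6] at h3
    simp only [Pi.zero_apply] at h3 ⊢
    linarith
  have hq0 : q = 0 := by
    funext i
    have h := Subgroup.mem_center_iff.mp hx (PresentedGroup.of (Gen8.a i))
    have h2 := congrArg (fun t => (φ t).s) h
    simp only [map_mul, φ_of] at h2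
    have h3 : (fgen (Gen8.a i) * φ x).s = (φ x * fgen (Gen8.a i)).s := h2
    rw [Hei.mul_s, Hei.mul_s] at h3
    have h4 : ∑ k : Fin g, (fgen (Gen8.a i : Gen8 g)).q k * (φ x).p k = 0 := by
      show ∑ k : Fin g, (0 : Fin g → ℤ) k * (φ x).p k = 0
      simp
    have h5 : ∑ k : Fin g, (φ x).q k * (fgen (Gen8.a i : Gen8 g)).p k = (φ x).q i := by
      show ∑ k : Fin g, (φ x).q k * (Pi.single i 1 : Fin g → ℤ) k = _
      exact dot_single_r i _
    rw [h4, h5] at h3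
    have h6 : (fgen (Gen8.a i : Gen8 g)).s = 0 := rfl
    rw [hXq] at h3
    rw [h6] at h3
    simp only [Pi.zero_apply] at h3 ⊢
    linarith
  rw [hxe, hp0, hq0, Amap_zero, Bmap_zero, mul_one, mul_one]
  exact hc


end Stmt8

/-- In the presented group `G`, the center is the subgroup generated by `σ` and `ζ`,
and this subgroup is free abelian of rank 2. -/
theorem stmt_8 (g : ℕ) (hg : 1 ≤ g) :
    Subgroup.center (PresentedGroup (rels8 g)) =
      Subgroup.closure {PresentedGroup.of Gen8.sigma, PresentedGroup.of Gen8.zeta} ∧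
    (∀ m n : ℤ, (PresentedGroup.of (rels := rels8 g) Gen8.sigma) ^ m *
        (PresentedGroup.of (rels := rels8 g) Gen8.zeta) ^ n = 1 → m = 0 ∧ n = 0) := by
  constructor
  · exact le_antisymm Stmt8.center_le_C Stmt8.C_le_center
  · intro m n h
    have h2 := congrArg (Stmt8.φ (g := g)) h
    rw [map_mul, map_zpow, map_zpow, Stmt8.φ_of, Stmt8.φ_of, map_one] at h2
    have h3 : (⟨m, n, 0, 0⟩ : Hei g) = 1 := by
      rw [← Stmt8.hei_pow m n]
      exact h2
    have hs := congrArg Hei.s h3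
    have hz := congrArg Hei.z h3
    exact ⟨hs, hz⟩
end

section
/- Let G be the group with presentation: generators σ, ζ, a₁, b₁, …, a_g, b_g (g ≥ 1); relations: all pairs of distinct generators commute except {a_i, b_i}, and [a_i, b_i] = σ² for each i. Then every element of G can be written uniquely in the form σ^p ζ^q a₁^{m₁} ⋯ a_g^{m_g} b₁^{n₁} ⋯ b_g^{n_g} with p, q, m_i, n_i ∈ ℤ. -/
/-- Generators: `σ`, `ζ`, and `aᵢ`, `bᵢ` for `i = 1, …, g`. -/
inductive Gen9 (g : ℕ)
  | sigma : Gen9 g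
  | zeta : Gen9 g
  | a : Fin g → Gen9 g
  | b : Fin g → Gen9 g

/-- `x` and `y` form an exceptional pair `{aᵢ, bᵢ}`. -/
def Gen9.exceptional {g : ℕ} (x y : Gen9 g) : Prop :=
  ∃ i : Fin g, (x = .a i ∧ y = .b i) ∨ (x = .b i ∧ y = .a i)

open scoped commutatorElement

/-- The defining relators: all pairs of distinct generators commute except the
pairs `{aᵢ, bᵢ}`, and `[aᵢ, bᵢ] = σ²`. -/
def rels9 (g : ℕ) : Set (FreeGroup (Gen9 g)) :=
  { r | ∃ x y : Gen9 g, x ≠ y ∧ ¬ Gen9.exceptional x y ∧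
      r = ⁅FreeGroup.of x, FreeGroup.of y⁆ } ∪
  { r | ∃ i : Fin g,
      r = ⁅FreeGroup.of (Gen9.a i), FreeGroup.of (Gen9.b i)⁆ *
            (FreeGroup.of (Gen9.sigma (g := g)) ^ 2)⁻¹ }
@[ext] structure H9 (g : ℕ) where
  p : ℤ
  q : ℤ
  m : Fin g → ℤ
  n : Fin g → ℤ

namespace H9
variable {g : ℕ}

instance : Mul (H9 g) :=
  ⟨fun x y => ⟨x.p + y.p - 2 * ∑ i, x.n i * y.m i, x.q + y.q, x.m + y.m, x.n + y.n⟩⟩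
instance : One (H9 g) := ⟨⟨0, 0, 0, 0⟩⟩
instance : Inv (H9 g) := ⟨fun x => ⟨-x.p - 2 * ∑ i, x.n i * x.m i, -x.q, -x.m, -x.n⟩⟩

@[simp] lemma mul_p (x y : H9 g) : (x * y).p = x.p + y.p - 2 * ∑ i, x.n i * y.m i := rfl
@[simp] lemma mul_q (x y : H9 g) : (x * y).q = x.q + y.q := rfl
@[simp] lemma mul_m (x y : H9 g) : (x * y).m = x.m + y.m := rfl
@[simp] lemma mul_n (x y : H9 g) : (x * y).n = x.n + y.n := rfl
@[simp] lemma one_p : (1 : H9 g).p = 0 := rfl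
@[simp] lemma one_q : (1 : H9 g).q = 0 := rfl
@[simp] lemma one_m : (1 : H9 g).m = 0 := rfl
@[simp] lemma one_n : (1 : H9 g).n = 0 := rfl
@[simp] lemma inv_p (x : H9 g) : (x⁻¹).p = -x.p - 2 * ∑ i, x.n i * x.m i := rfl
@[simp] lemma inv_q (x : H9 g) : (x⁻¹).q = -x.q := rfl
@[simp] lemma inv_m (x : H9 g) : (x⁻¹).m = -x.m := rfl
@[simp] lemma inv_n (x : H9 g) : (x⁻¹).n = -x.n := rfl

instance : Group (H9 g) where
  mul_assoc x y z := by
    ext <;> simp [Pi.add_apply, add_mul, mul_add, Finset.sum_add_distrib] <;> ring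
  one_mul x := by ext <;> simp
  mul_one x := by ext <;> simp
  inv_mul_cancel x := by
    ext <;> simp [Pi.add_apply, Pi.neg_apply, ← Finset.sum_add_distrib] <;> ring_nf

/-- images of generators -/
def gen : Gen9 g → H9 g
  | .sigma => ⟨1, 0, 0, 0⟩
  | .zeta => ⟨0, 1, 0, 0⟩
  | .a i => ⟨0, 0, Pi.single i 1, 0⟩
  | .b i => ⟨0, 0, 0, Pi.single i 1⟩

lemma rels_hold : ∀ r ∈ rels9 g, FreeGroup.lift (gen (g := g)) r = 1 := by
  rintro r (⟨x, y, hxy, hexc, rfl⟩ | ⟨i, rfl⟩)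
  · simp only [map_commutatorElement, FreeGroup.lift_apply_of]
    rw [commutatorElement_eq_one_iff_mul_comm]
    have key : ∑ j, (gen x).n j * (gen y).m j = ∑ j, (gen y).n j * (gen x).m j := by
      cases x <;> cases y <;>
        simp_all [gen, Gen9.exceptional, Pi.single_apply, Finset.sum_ite_eq',
          mul_comm] <;>
        aesop
    ext <;> simp [key] <;> ring
  · simp only [map_mul, map_inv, map_pow, map_commutatorElement, FreeGroup.lift_apply_of]
    rw [mul_inv_eq_one, commutatorElement_def]
    ext <;> simp [gen, pow_two, Pi.single_apply] <;> ring_nf <;> simp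

end H9
namespace Stmt9
variable {g : ℕ}

abbrev G (g : ℕ) := PresentedGroup (rels9 g)

def π : G g →* H9 g := PresentedGroup.toGroup H9.rels_hold

noncomputable def S : G g := PresentedGroup.of Gen9.sigma
noncomputable def Z : G g := PresentedGroup.of Gen9.zeta
noncomputable def A (i : Fin g) : G g := PresentedGroup.of (Gen9.a i)
noncomputable def B (i : Fin g) : G g := PresentedGroup.of (Gen9.b i)

/-- relators become trivial in G -/
lemma rel_one {r : FreeGroup (Gen9 g)} (hr : r ∈ rels9 g) :
    FreeGroup.lift (PresentedGroup.of (rels := rels9 g)) r = 1 := by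
  have : FreeGroup.lift (PresentedGroup.of (rels := rels9 g)) = PresentedGroup.mk (rels9 g) := by
    ext x
    simp [PresentedGroup.of]
  rw [this]
  exact (QuotientGroup.eq_one_iff r).2 (Subgroup.subset_normalClosure hr)

lemma comm_of (x y : Gen9 g) (hxy : x ≠ y) (hexc : ¬ Gen9.exceptional x y) :
    Commute (PresentedGroup.of (rels := rels9 g) x) (PresentedGroup.of (rels := rels9 g) y) := by
  have := rel_one (g := g) (Or.inl ⟨x, y, hxy, hexc, rfl⟩)
  simp only [map_commutatorElement, FreeGroup.lift_apply_of] at this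
  exact commutatorElement_eq_one_iff_mul_comm.mp this

lemma ab_rel (i : Fin g) : A i * B i * (A i)⁻¹ * (B i)⁻¹ = S ^ 2 := by
  have := rel_one (g := g) (Or.inr ⟨i, rfl⟩)
  simp only [map_mul, map_inv, map_pow, map_commutatorElement, FreeGroup.lift_apply_of] at this
  rw [mul_inv_eq_one] at this
  exact this

lemma comm_SZ : Commute (S (g := g)) Z := comm_of _ _ (by simp) (by simp [Gen9.exceptional])
lemma comm_SA (i : Fin g) : Commute S (A i) :=
  comm_of _ _ (by simp) (by simp [Gen9.exceptional])
lemma comm_SB (i : Fin g) : Commute S (B i) :=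
  comm_of _ _ (by simp) (by simp [Gen9.exceptional])
lemma comm_ZA (i : Fin g) : Commute Z (A i) :=
  comm_of _ _ (by simp) (by simp [Gen9.exceptional])
lemma comm_ZB (i : Fin g) : Commute Z (B i) :=
  comm_of _ _ (by simp) (by simp [Gen9.exceptional])
lemma comm_AA (i j : Fin g) : Commute (A i) (A j) := by
  rcases eq_or_ne i j with rfl | h
  · exact Commute.refl _
  · exact comm_of _ _ (by simp [h]) (by simp [Gen9.exceptional])
lemma comm_BB (i j : Fin g) : Commute (B i) (B j) := by
  rcases eq_or_ne i j with rfl | h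
  · exact Commute.refl _
  · exact comm_of _ _ (by simp [h]) (by simp [Gen9.exceptional])
lemma comm_AB (i j : Fin g) (h : i ≠ j) : Commute (A i) (B j) :=
  comm_of _ _ (by simp) (by simp [Gen9.exceptional, h, h.symm])

lemma S_central (x : G g) : Commute S x := by
  have hx : x ∈ Subgroup.centralizer {S (g := g)} := by
    apply PresentedGroup.generated_by
    intro j
    rw [Subgroup.mem_centralizer_iff]
    rintro y rfl
    cases j
    · rfl
    · exact comm_SZ.eq
    · exact (comm_SA _).eq
    · exact (comm_SB _).eq
  exact (Subgroup.mem_centralizer_iff.mp hx S rfl)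

lemma Z_central (x : G g) : Commute Z x := by
  have hx : x ∈ Subgroup.centralizer {Z (g := g)} := by
    apply PresentedGroup.generated_by
    intro j
    rw [Subgroup.mem_centralizer_iff]
    rintro y rfl
    cases j
    · exact comm_SZ.eq.symm
    · rfl
    · exact (comm_ZA _).eq
    · exact (comm_ZB _).eq
  exact (Subgroup.mem_centralizer_iff.mp hx Z rfl)

lemma conj_AB (i : Fin g) : A i * B i * (A i)⁻¹ = S ^ 2 * B i := by
  have h := ab_rel (g := g) i
  calc A i * B i * (A i)⁻¹ = A i * B i * (A i)⁻¹ * (B i)⁻¹ * B i := by group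
  _ = S ^ 2 * B i := by rw [h]

lemma Sc2 (y : G g) : y * S ^ 2 = S ^ 2 * y := ((S_central y).symm.pow_right 2).eq
lemma Sc2' (y : G g) : y * (S ^ 2)⁻¹ = (S ^ 2)⁻¹ * y := ((S_central y).symm.pow_right 2).inv_right.eq

lemma conj_AB' (i : Fin g) : (A i)⁻¹ * B i * A i = (S ^ 2)⁻¹ * B i := by
  have h3 : B i = S ^ 2 * ((A i)⁻¹ * B i * A i) := by
    conv_lhs => rw [show B i = (A i)⁻¹ * (A i * B i * (A i)⁻¹) * A i by group]
    rw [conj_AB, show (A i)⁻¹ * (S ^ 2 * B i) * A i = (A i)⁻¹ * S ^ 2 * (B i * A i) by group,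
      Sc2]
    group
  calc (A i)⁻¹ * B i * A i = (S ^ 2)⁻¹ * (S ^ 2 * ((A i)⁻¹ * B i * A i)) := by group
  _ = (S ^ 2)⁻¹ * B i := by rw [← h3]

lemma conj_AmB (i : Fin g) (m : ℤ) : A i ^ m * B i * (A i ^ m)⁻¹ = S ^ (2 * m) * B i := by
  induction m using Int.induction_on with
  | zero => simp
  | succ k ih =>
      have e1 : A i ^ ((k : ℤ) + 1) = A i ^ (k:ℤ) * A i := zpow_add_one _ _
      rw [e1, mul_inv_rev]
      calc A i ^ (k:ℤ) * A i * B i * ((A i)⁻¹ * (A i ^ (k:ℤ))⁻¹)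
          = A i ^ (k:ℤ) * (A i * B i * (A i)⁻¹) * (A i ^ (k:ℤ))⁻¹ := by group
        _ = A i ^ (k:ℤ) * (S ^ 2 * B i) * (A i ^ (k:ℤ))⁻¹ := by rw [conj_AB]
        _ = S ^ 2 * (A i ^ (k:ℤ) * B i * (A i ^ (k:ℤ))⁻¹) := by
            rw [show A i ^ (k:ℤ) * (S ^ 2 * B i) * (A i ^ (k:ℤ))⁻¹
                = A i ^ (k:ℤ) * S ^ 2 * (B i * (A i ^ (k:ℤ))⁻¹) by group, Sc2]
            group
        _ = S ^ 2 * (S ^ (2*(k:ℤ)) * B i) := by rw [ih]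
        _ = S ^ (2 * ((k:ℤ) + 1)) * B i := by
            rw [← mul_assoc, ← zpow_natCast (S (g:=g)) 2, ← zpow_add]
            ring_nf
  | pred k ih =>
      have e1 : A i ^ (-(k : ℤ) - 1) = A i ^ (-(k:ℤ)) * (A i)⁻¹ := by
        rw [zpow_sub_one]
      rw [e1, mul_inv_rev, inv_inv]
      calc A i ^ (-(k:ℤ)) * (A i)⁻¹ * B i * (A i * (A i ^ (-(k:ℤ)))⁻¹)
          = A i ^ (-(k:ℤ)) * ((A i)⁻¹ * B i * A i) * (A i ^ (-(k:ℤ)))⁻¹ := by group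
        _ = A i ^ (-(k:ℤ)) * ((S ^ 2)⁻¹ * B i) * (A i ^ (-(k:ℤ)))⁻¹ := by rw [conj_AB']
        _ = (S ^ 2)⁻¹ * (A i ^ (-(k:ℤ)) * B i * (A i ^ (-(k:ℤ)))⁻¹) := by
            rw [show A i ^ (-(k:ℤ)) * ((S ^ 2)⁻¹ * B i) * (A i ^ (-(k:ℤ)))⁻¹
                = A i ^ (-(k:ℤ)) * (S ^ 2)⁻¹ * (B i * (A i ^ (-(k:ℤ)))⁻¹) by group, Sc2']
            group
        _ = (S ^ 2)⁻¹ * (S ^ (2 * -(k:ℤ)) * B i) := by rw [ih]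
        _ = S ^ (2 * (-(k:ℤ) - 1)) * B i := by
            rw [← mul_assoc, ← zpow_natCast (S (g:=g)) 2, ← zpow_neg, ← zpow_add]
            ring_nf

lemma BnAm (i : Fin g) (m n : ℤ) :
    B i ^ n * A i ^ m = S ^ (-(2 * n * m)) * (A i ^ m * B i ^ n) := by
  have h1 : A i ^ m * B i ^ n * (A i ^ m)⁻¹ = S ^ (2 * m * n) * B i ^ n := by
    calc A i ^ m * B i ^ n * (A i ^ m)⁻¹
        = (A i ^ m * B i * (A i ^ m)⁻¹) ^ n := conj_zpow.symm
      _ = (S ^ (2 * m) * B i) ^ n := by rw [conj_AmB]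
      _ = (S ^ (2 * m)) ^ n * B i ^ n := ((S_central (B i)).zpow_left (2 * m)).mul_zpow n
      _ = S ^ (2 * m * n) * B i ^ n := by rw [← zpow_mul]
  have h2 : A i ^ m * B i ^ n = S ^ (2 * m * n) * B i ^ n * A i ^ m := by
    rw [← h1]; group
  calc B i ^ n * A i ^ m
      = S ^ (-(2 * n * m)) * (S ^ (2 * m * n) * (B i ^ n * A i ^ m)) := by
        rw [← mul_assoc, ← zpow_add, show -(2 * n * m) + 2 * m * n = 0 by ring, zpow_zero,
          one_mul]
    _ = S ^ (-(2 * n * m)) * (A i ^ m * B i ^ n) := by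
        rw [h2]; group

noncomputable def Pa (m : Fin g → ℤ) : G g := ((List.finRange g).map (fun i => A i ^ m i)).prod
noncomputable def Pb (n : Fin g → ℤ) : G g := ((List.finRange g).map (fun i => B i ^ n i)).prod

lemma cS (a : ℤ) (x : G g) : x * S ^ a = S ^ a * x := ((S_central x).symm.zpow_right a).eq
lemma cZ (a : ℤ) (x : G g) : x * Z ^ a = Z ^ a * x := ((Z_central x).symm.zpow_right a).eq

lemma central_pull2 (a : ℤ) (x y : G g) : x * (S ^ a * y) = S ^ a * (x * y) := by
  rw [← mul_assoc, cS, mul_assoc]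

lemma movB (i : Fin g) (c : ℤ) (m' : Fin g → ℤ) (l : List (Fin g)) :
    B i ^ c * (l.map fun j => A j ^ m' j).prod
      = S ^ (-(2 * c * (m' i * (l.count i : ℤ))))
          * ((l.map fun j => A j ^ m' j).prod * B i ^ c) := by
  induction l with
  | nil => simp
  | cons j t ih =>
    simp only [List.map_cons, List.prod_cons]
    rcases eq_or_ne j i with rfl | hji
    · rw [← mul_assoc, BnAm,
        show S ^ (-(2 * c * m' j)) * (A j ^ m' j * B j ^ c)
            * (t.map fun k => A k ^ m' k).prod
          = S ^ (-(2 * c * m' j))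
            * (A j ^ m' j * (B j ^ c * (t.map fun k => A k ^ m' k).prod)) by group,
        ih, central_pull2, ← mul_assoc, ← zpow_add, List.count_cons_self]
      have he : -(2 * c * m' j) + -(2 * c * (m' j * (t.count j : ℤ)))
          = -(2 * c * (m' j * ((t.count j + 1 : ℕ) : ℤ))) := by push_cast; ring
      rw [he]; group
    · have hcomm : Commute (B i ^ c) (A j ^ m' j) :=
        ((comm_AB j i hji).symm.zpow_left c).zpow_right (m' j)
      rw [← mul_assoc, hcomm.eq, mul_assoc, ih, central_pull2,
        List.count_cons_of_ne hji]
      group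

lemma count_finRange (j : Fin g) : (List.finRange g).count j = 1 :=
  List.count_eq_one_of_mem (List.nodup_finRange g) (List.mem_finRange j)

lemma movBPa (i : Fin g) (c : ℤ) (m' : Fin g → ℤ) :
    B i ^ c * Pa m' = S ^ (-(2 * (c * m' i))) * (Pa m' * B i ^ c) := by
  unfold Pa
  rw [movB, count_finRange]
  push_cast
  ring_nf

lemma movPb (n m' : Fin g → ℤ) (l : List (Fin g)) :
    (l.map fun i => B i ^ n i).prod * Pa m'
      = S ^ (-(2 * (l.map fun i => n i * m' i).sum))
          * (Pa m' * (l.map fun i => B i ^ n i).prod) := by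
  induction l with
  | nil => simp
  | cons j t ih =>
    simp only [List.map_cons, List.prod_cons, List.sum_cons]
    rw [mul_assoc, ih, central_pull2, ← mul_assoc (B j ^ n j), movBPa,
      show S ^ (-(2 * (n j * m' j + (t.map fun i => n i * m' i).sum)))
        = S ^ (-(2 * (n j * m' j))) * S ^ (-(2 * (t.map fun i => n i * m' i).sum)) by
          rw [← zpow_add]; ring_nf]
    group


lemma prod_mul_prod (f f' : Fin g → G g) (h : ∀ i j, Commute (f i) (f' j)) :
    ∀ l : List (Fin g), (l.map f).prod * (l.map f').prod = (l.map fun i => f i * f' i).prod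
  | [] => by simp
  | j :: t => by
    simp only [List.map_cons, List.prod_cons]
    have hc : Commute (f' j) ((t.map f).prod) := by
      apply Commute.list_prod_right
      intro x hx
      obtain ⟨i, _, rfl⟩ := List.mem_map.mp hx
      exact (h i j).symm
    calc f j * (t.map f).prod * (f' j * (t.map f').prod)
        = f j * ((f' j * (t.map f).prod) * (t.map f').prod) := by
          rw [hc.eq]; group
      _ = f j * f' j * ((t.map f).prod * (t.map f').prod) := by group
      _ = f j * f' j * (t.map fun i => f i * f' i).prod := by rw [prod_mul_prod f f' h t]

lemma Pa_mul (m m' : Fin g → ℤ) : Pa m * Pa m' = Pa (m + m') := by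
  unfold Pa
  rw [prod_mul_prod _ _ (fun i j => ((comm_AA i j).zpow_left (m i)).zpow_right (m' j))]
  simp [zpow_add]

lemma Pb_mul (n n' : Fin g → ℤ) : Pb n * Pb n' = Pb (n + n') := by
  unfold Pb
  rw [prod_mul_prod _ _ (fun i j => ((comm_BB i j).zpow_left (n i)).zpow_right (n' j))]
  simp [zpow_add]

lemma movPbPa (n m' : Fin g → ℤ) :
    Pb n * Pa m' = S ^ (-(2 * (((List.finRange g).map fun i => n i * m' i).sum)))
      * (Pa m' * Pb n) := by
  unfold Pb
  exact movPb n m' (List.finRange g)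

/- pull/merge simp set -/
lemma pZS (a b : ℤ) (x : G g) : Z ^ a * (S ^ b * x) = S ^ b * (Z ^ a * x) := central_pull2 _ _ _
lemma pZS' (a b : ℤ) : (Z : G g) ^ a * S ^ b = S ^ b * Z ^ a := cS b (Z ^ a)
lemma pPaS (m : Fin g → ℤ) (b : ℤ) (x : G g) : Pa m * (S ^ b * x) = S ^ b * (Pa m * x) :=
  central_pull2 _ _ _
lemma pPaS' (m : Fin g → ℤ) (b : ℤ) : Pa m * S ^ b = S ^ b * Pa m := cS b (Pa m)
lemma pPbS (n : Fin g → ℤ) (b : ℤ) (x : G g) : Pb n * (S ^ b * x) = S ^ b * (Pb n * x) :=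
  central_pull2 _ _ _
lemma pPbS' (n : Fin g → ℤ) (b : ℤ) : Pb n * S ^ b = S ^ b * Pb n := cS b (Pb n)
lemma pPaZ (m : Fin g → ℤ) (b : ℤ) (x : G g) : Pa m * (Z ^ b * x) = Z ^ b * (Pa m * x) := by
  rw [← mul_assoc, cZ, mul_assoc]
lemma pPaZ' (m : Fin g → ℤ) (b : ℤ) : Pa m * Z ^ b = Z ^ b * Pa m := cZ b (Pa m)
lemma pPbZ (n : Fin g → ℤ) (b : ℤ) (x : G g) : Pb n * (Z ^ b * x) = Z ^ b * (Pb n * x) := by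
  rw [← mul_assoc, cZ, mul_assoc]
lemma pPbZ' (n : Fin g → ℤ) (b : ℤ) : Pb n * Z ^ b = Z ^ b * Pb n := cZ b (Pb n)
lemma pPbPa (n m' : Fin g → ℤ) (x : G g) :
    Pb n * (Pa m' * x)
      = S ^ (-(2 * (((List.finRange g).map fun i => n i * m' i).sum)))
        * (Pa m' * (Pb n * x)) := by
  rw [← mul_assoc, movPbPa]; group
lemma mSS (a b : ℤ) (x : G g) : S ^ a * (S ^ b * x) = S ^ (a + b) * x := by
  rw [← mul_assoc, ← zpow_add]
lemma mSS' (a b : ℤ) : (S : G g) ^ a * S ^ b = S ^ (a + b) := (zpow_add _ _ _).symm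
lemma mZZ (a b : ℤ) (x : G g) : Z ^ a * (Z ^ b * x) = Z ^ (a + b) * x := by
  rw [← mul_assoc, ← zpow_add]
lemma mZZ' (a b : ℤ) : (Z : G g) ^ a * Z ^ b = Z ^ (a + b) := (zpow_add _ _ _).symm
lemma mPaPa (m m' : Fin g → ℤ) (x : G g) : Pa m * (Pa m' * x) = Pa (m + m') * x := by
  rw [← mul_assoc, Pa_mul]
lemma mPbPb (n n' : Fin g → ℤ) (x : G g) : Pb n * (Pb n' * x) = Pb (n + n') * x := by
  rw [← mul_assoc, Pb_mul]

noncomputable def expr (e : H9 g) : G g := S ^ e.p * Z ^ e.q * Pa e.m * Pb e.n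

lemma expr_mul (x y : H9 g) : expr x * expr y = expr (x * y) := by
  unfold expr
  simp only [H9.mul_p, H9.mul_q, H9.mul_m, H9.mul_n, mul_assoc, pZS, pZS', pPaS, pPaS',
    pPbS, pPbS', pPaZ, pPaZ', pPbZ, pPbZ', pPbPa, mSS, mSS', mZZ, mZZ', mPaPa, mPbPb,
    Pa_mul, Pb_mul]
  rw [Fin.sum_univ_def]
  ring_nf

lemma expr_one : expr (1 : H9 g) = 1 := by
  unfold expr Pa Pb
  simp

noncomputable def exprHom : H9 g →* G g := MonoidHom.mk' expr (fun a b => (expr_mul a b).symm)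

lemma Pa_single_list (i : Fin g) (c : ℤ) :
    ∀ l : List (Fin g), (l.map fun j => A j ^ ((Pi.single i c : Fin g → ℤ) j)).prod = A i ^ (c * (l.count i : ℤ))
  | [] => by simp
  | j :: t => by
    simp only [List.map_cons, List.prod_cons, Pa_single_list i c t]
    rcases eq_or_ne j i with rfl | hji
    · rw [List.count_cons_self, Pi.single_eq_same, ← zpow_add]
      push_cast; ring_nf
    · rw [List.count_cons_of_ne hji, Pi.single_eq_of_ne hji, zpow_zero, one_mul]

lemma Pa_single (i : Fin g) (c : ℤ) : Pa (Pi.single i c) = A i ^ c := by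
  unfold Pa
  rw [Pa_single_list, count_finRange]
  norm_num

lemma Pb_single_list (i : Fin g) (c : ℤ) :
    ∀ l : List (Fin g), (l.map fun j => B j ^ ((Pi.single i c : Fin g → ℤ) j)).prod = B i ^ (c * (l.count i : ℤ))
  | [] => by simp
  | j :: t => by
    simp only [List.map_cons, List.prod_cons, Pb_single_list i c t]
    rcases eq_or_ne j i with rfl | hji
    · rw [List.count_cons_self, Pi.single_eq_same, ← zpow_add]
      push_cast; ring_nf
    · rw [List.count_cons_of_ne hji, Pi.single_eq_of_ne hji, zpow_zero, one_mul]

lemma Pb_single (i : Fin g) (c : ℤ) : Pb (Pi.single i c) = B i ^ c := by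
  unfold Pb
  rw [Pb_single_list, count_finRange]
  norm_num

lemma Pa_zero : Pa (0 : Fin g → ℤ) = 1 := by unfold Pa; simp
lemma Pb_zero : Pb (0 : Fin g → ℤ) = 1 := by unfold Pb; simp

lemma expr_gen (j : Gen9 g) : expr (H9.gen j) = PresentedGroup.of j := by
  cases j with
  | sigma =>
      show S ^ (1:ℤ) * Z ^ (0:ℤ) * Pa 0 * Pb 0 = _
      simp [Pa_zero, Pb_zero, S]
  | zeta =>
      show S ^ (0:ℤ) * Z ^ (1:ℤ) * Pa 0 * Pb 0 = _
      simp [Pa_zero, Pb_zero, Z]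
  | a i =>
      show S ^ (0:ℤ) * Z ^ (0:ℤ) * Pa (Pi.single i 1) * Pb 0 = _
      simp [Pa_single, Pb_zero, A]
  | b i =>
      show S ^ (0:ℤ) * Z ^ (0:ℤ) * Pa 0 * Pb (Pi.single i 1) = _
      simp [Pa_zero, Pb_single, B]

lemma expr_pi (x : G g) : expr (π x) = x := by
  have h : (exprHom.comp π : G g →* G g) = MonoidHom.id (G g) := by
    apply PresentedGroup.ext
    intro j
    simp only [MonoidHom.comp_apply, MonoidHom.id_apply]
    show expr (π (PresentedGroup.of j)) = PresentedGroup.of j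
    rw [show π (PresentedGroup.of j) = H9.gen j from PresentedGroup.toGroup.of _]
    exact expr_gen j
  have := congrArg (fun f : G g →* G g => f x) h
  exact this

lemma h9_zpow_n0 (v : H9 g) (hv : v.n = 0) (c : ℤ) :
    v ^ c = ⟨c * v.p, c * v.q, c • v.m, 0⟩ := by
  induction c using Int.induction_on with
  | zero => ext <;> simp
  | succ k ih =>
      rw [zpow_add_one, ih]
      ext <;> simp [hv, add_smul] <;> ring
  | pred k ih =>
      rw [zpow_sub_one, ih]
      ext <;> simp [hv, sub_smul] <;> ring

lemma h9_zpow_m0 (v : H9 g) (hv : v.m = 0) (c : ℤ) :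
    v ^ c = ⟨c * v.p, c * v.q, 0, c • v.n⟩ := by
  induction c using Int.induction_on with
  | zero => ext <;> simp
  | succ k ih =>
      rw [zpow_add_one, ih]
      ext <;> simp [hv, add_smul] <;> ring
  | pred k ih =>
      rw [zpow_sub_one, ih]
      ext <;> simp [hv, sub_smul] <;> ring

lemma h9_prod_m (f : Fin g → Fin g → ℤ) :
    ∀ l : List (Fin g),
      (l.map fun i => (⟨0, 0, f i, 0⟩ : H9 g)).prod = ⟨0, 0, (l.map f).sum, 0⟩
  | [] => by ext <;> simp
  | j :: t => by
      simp only [List.map_cons, List.prod_cons, h9_prod_m f t]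
      ext <;> simp

lemma h9_prod_n (f : Fin g → Fin g → ℤ) :
    ∀ l : List (Fin g),
      (l.map fun i => (⟨0, 0, 0, f i⟩ : H9 g)).prod = ⟨0, 0, 0, (l.map f).sum⟩
  | [] => by ext <;> simp
  | j :: t => by
      simp only [List.map_cons, List.prod_cons, h9_prod_n f t]
      ext <;> simp

lemma pi_S_pow (c : ℤ) : π ((S : G g) ^ c) = ⟨c, 0, 0, 0⟩ := by
  rw [map_zpow, show π (S : G g) = H9.gen .sigma from PresentedGroup.toGroup.of H9.rels_hold,
    h9_zpow_n0 _ rfl]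
  ext <;> simp [H9.gen]

lemma pi_Z_pow (c : ℤ) : π ((Z : G g) ^ c) = ⟨0, c, 0, 0⟩ := by
  rw [map_zpow, show π (Z : G g) = H9.gen .zeta from PresentedGroup.toGroup.of H9.rels_hold,
    h9_zpow_n0 _ rfl]
  ext <;> simp [H9.gen]

lemma pi_A_pow (i : Fin g) (c : ℤ) : π ((A i) ^ c) = ⟨0, 0, Pi.single i c, 0⟩ := by
  rw [map_zpow, show π (A i) = H9.gen (.a i) from PresentedGroup.toGroup.of H9.rels_hold,
    h9_zpow_n0 _ rfl]
  ext j <;> simp [H9.gen, Pi.single_apply, mul_ite]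

lemma pi_B_pow (i : Fin g) (c : ℤ) : π ((B i) ^ c) = ⟨0, 0, 0, Pi.single i c⟩ := by
  rw [map_zpow, show π (B i) = H9.gen (.b i) from PresentedGroup.toGroup.of H9.rels_hold,
    h9_zpow_m0 _ rfl]
  ext j <;> simp [H9.gen, Pi.single_apply, mul_ite]

lemma pi_expr (e : H9 g) : π (expr e) = e := by
  unfold expr Pa Pb
  rw [map_mul, map_mul, map_mul, map_list_prod, map_list_prod, List.map_map, List.map_map,
    pi_S_pow, pi_Z_pow]
  have h1 : ((π : G g →* H9 g) ∘ fun i => A i ^ e.m i)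
      = fun i => (⟨0, 0, Pi.single i (e.m i), 0⟩ : H9 g) :=
    funext fun i => pi_A_pow i (e.m i)
  have h2 : ((π : G g →* H9 g) ∘ fun i => B i ^ e.n i)
      = fun i => (⟨0, 0, 0, Pi.single i (e.n i)⟩ : H9 g) :=
    funext fun i => pi_B_pow i (e.n i)
  rw [h1, h2, h9_prod_m, h9_prod_n]
  have hm : ((List.finRange g).map fun i => (Pi.single i (e.m i) : Fin g → ℤ)).sum = e.m := by
    rw [← Fin.sum_univ_def]; exact Finset.univ_sum_single e.m
  have hn : ((List.finRange g).map fun i => (Pi.single i (e.n i) : Fin g → ℤ)).sum = e.n := by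
    rw [← Fin.sum_univ_def]; exact Finset.univ_sum_single e.n
  rw [hm, hn]
  ext <;> simp
end Stmt9

/-- Every element of the presented group `G` can be written uniquely in the form
`σ^p ζ^q a₁^{m₁} ⋯ a_g^{m_g} b₁^{n₁} ⋯ b_g^{n_g}`. -/
theorem stmt_9 (g : ℕ) (hg : 1 ≤ g) (x : PresentedGroup (rels9 g)) :
    ∃! e : ℤ × ℤ × (Fin g → ℤ) × (Fin g → ℤ),
      x = (PresentedGroup.of (rels := rels9 g) Gen9.sigma) ^ e.1 *
          (PresentedGroup.of (rels := rels9 g) Gen9.zeta) ^ e.2.1 *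
          ((List.finRange g).map
            (fun i => (PresentedGroup.of (rels := rels9 g) (Gen9.a i)) ^ e.2.2.1 i)).prod *
          ((List.finRange g).map
            (fun i => (PresentedGroup.of (rels := rels9 g) (Gen9.b i)) ^ e.2.2.2 i)).prod := by
  refine ⟨⟨(Stmt9.π x).p, (Stmt9.π x).q, (Stmt9.π x).m, (Stmt9.π x).n⟩, ?_, ?_⟩
  · show x = Stmt9.expr (Stmt9.π x)
    exact (Stmt9.expr_pi x).symm
  · rintro ⟨p, q, m, n⟩ hy
    have h : Stmt9.π x = ⟨p, q, m, n⟩ := by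
      rw [show x = Stmt9.expr ⟨p, q, m, n⟩ from hy, Stmt9.pi_expr]
    rw [h]
end

section
/- Let H be the group with presentation: generators σ, σ̃, ζ, a₁, b₁, …, a_g, b_g, ã₁, b̃₁, …, ã_g, b̃_g (g ≥ 1); relations: all pairs of distinct generators commute except the pairs {a_i, b_i}, {ã_i, b̃_i}, {b_i, ã_i}, {a_i, b̃_i}; and [a_i, b_i] = σ², [ã_i, b̃_i] = σ̃², [a_i, b̃_i] = [ã_i, b_i] = ζ for each i. Then the center of H is the free abelian group of rank 3 generated by σ, σ̃, ζ. -/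
open scoped commutatorElement

variable {g : ℕ}

/-- dot product -/
def dt (u v : Fin g → ℤ) : ℤ := ∑ i, u i * v i

lemma dt_add_left (u v w : Fin g → ℤ) : dt (u + v) w = dt u w + dt v w := by
  simp [dt, add_mul, Finset.sum_add_distrib]

lemma dt_add_right (u v w : Fin g → ℤ) : dt u (v + w) = dt u v + dt u w := by
  simp [dt, mul_add, Finset.sum_add_distrib]

lemma dt_neg_left (u v : Fin g → ℤ) : dt (-u) v = -(dt u v) := by
  simp [dt, Finset.sum_neg_distrib]

lemma dt_neg_right (u v : Fin g → ℤ) : dt u (-v) = -(dt u v) := by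
  simp [dt, Finset.sum_neg_distrib]

lemma dt_zero_left (v : Fin g → ℤ) : dt 0 v = 0 := by simp [dt]
lemma dt_zero_right (v : Fin g → ℤ) : dt v 0 = 0 := by simp [dt]

lemma dt_single_right (v : Fin g → ℤ) (i : Fin g) : dt v (Pi.single i 1) = v i := by
  simp [dt, Pi.single_apply, mul_ite]

lemma dt_single_left (v : Fin g → ℤ) (i : Fin g) : dt (Pi.single i 1) v = v i := by
  simp [dt, Pi.single_apply, ite_mul]

lemma dt_single_single (i j : Fin g) :
    dt (Pi.single i (1:ℤ)) (Pi.single j 1) = if i = j then 1 else 0 := by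
  rw [dt_single_left]; simp [Pi.single_apply]

@[ext]
structure Mo (g : ℕ) where
  a : Fin g → ℤ
  b : Fin g → ℤ
  c : Fin g → ℤ
  d : Fin g → ℤ
  s : ℤ
  t : ℤ
  z : ℤ

namespace Mo

instance : One (Mo g) := ⟨⟨0,0,0,0,0,0,0⟩⟩
instance : Mul (Mo g) :=
  ⟨fun X Y => ⟨X.a + Y.a, X.b + Y.b, X.c + Y.c, X.d + Y.d,
    X.s + Y.s - 2 * dt X.b Y.a,
    X.t + Y.t - 2 * dt X.d Y.c,
    X.z + Y.z - dt X.d Y.a + dt X.c Y.b⟩⟩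
instance : Inv (Mo g) :=
  ⟨fun X => ⟨-X.a, -X.b, -X.c, -X.d,
    -X.s - 2 * dt X.b X.a,
    -X.t - 2 * dt X.d X.c,
    -X.z - dt X.d X.a + dt X.c X.b⟩⟩

lemma mul_def (X Y : Mo g) : X * Y = ⟨X.a + Y.a, X.b + Y.b, X.c + Y.c, X.d + Y.d,
    X.s + Y.s - 2 * dt X.b Y.a,
    X.t + Y.t - 2 * dt X.d Y.c,
    X.z + Y.z - dt X.d Y.a + dt X.c Y.b⟩ := rfl

lemma one_def : (1 : Mo g) = ⟨0,0,0,0,0,0,0⟩ := rfl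


lemma inv_def (X : Mo g) : X⁻¹ = ⟨-X.a, -X.b, -X.c, -X.d,
    -X.s - 2 * dt X.b X.a,
    -X.t - 2 * dt X.d X.c,
    -X.z - dt X.d X.a + dt X.c X.b⟩ := rfl

instance : Group (Mo g) :=
  Group.ofLeftAxioms
    (fun X Y Z => by
      ext <;> simp [mul_def, dt_add_left, dt_add_right] <;> ring)
    (fun X => by ext <;> simp [mul_def, one_def, dt_zero_left, dt_zero_right])
    (fun X => by
      ext <;>
        simp [mul_def, one_def, inv_def, dt_neg_left, dt_neg_right] <;> ring)

lemma commutator_eq (X Y : Mo g) :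
    ⁅X, Y⁆ = ⟨0, 0, 0, 0,
      -2 * (dt X.b Y.a - dt Y.b X.a),
      -2 * (dt X.d Y.c - dt Y.d X.c),
      -(dt X.d Y.a - dt Y.d X.a) + (dt X.c Y.b - dt Y.c X.b)⟩ := by
  ext <;>
    simp [commutatorElement_def, mul_def, inv_def, dt_add_left, dt_add_right,
      dt_neg_left, dt_neg_right] <;> ring

end Mo



/-- Generators: `σ`, `σ̃`, `ζ`, and `aᵢ`, `bᵢ`, `ãᵢ`, `b̃ᵢ` for `i = 1, …, g`. -/
inductive Gen10 (g : ℕ)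
  | sigma : Gen10 g
  | sigmat : Gen10 g
  | zeta : Gen10 g
  | a : Fin g → Gen10 g
  | b : Fin g → Gen10 g
  | at_ : Fin g → Gen10 g
  | bt : Fin g → Gen10 g

/-- `x` and `y` form one of the exceptional (non-commuting) pairs
`{aᵢ, bᵢ}`, `{ãᵢ, b̃ᵢ}`, `{bᵢ, ãᵢ}`, `{aᵢ, b̃ᵢ}`. -/
def Gen10.exceptional {g : ℕ} (x y : Gen10 g) : Prop :=
  ∃ i : Fin g,
    (x = .a i ∧ y = .b i) ∨ (x = .b i ∧ y = .a i) ∨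
    (x = .at_ i ∧ y = .bt i) ∨ (x = .bt i ∧ y = .at_ i) ∨
    (x = .b i ∧ y = .at_ i) ∨ (x = .at_ i ∧ y = .b i) ∨
    (x = .a i ∧ y = .bt i) ∨ (x = .bt i ∧ y = .a i)

/-- The defining relators: all pairs of distinct generators commute except the
exceptional pairs, and `[aᵢ,bᵢ] = σ²`, `[ãᵢ,b̃ᵢ] = σ̃²`, `[aᵢ,b̃ᵢ] = [ãᵢ,bᵢ] = ζ`. -/
def rels10 (g : ℕ) : Set (FreeGroup (Gen10 g)) :=
  { r | ∃ x y : Gen10 g, x ≠ y ∧ ¬ Gen10.exceptional x y ∧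
      r = ⁅FreeGroup.of x, FreeGroup.of y⁆ } ∪
  { r | ∃ i : Fin g,
      r = ⁅FreeGroup.of (Gen10.a i), FreeGroup.of (Gen10.b i)⁆ *
            (FreeGroup.of (Gen10.sigma (g := g)) ^ 2)⁻¹ } ∪
  { r | ∃ i : Fin g,
      r = ⁅FreeGroup.of (Gen10.at_ i), FreeGroup.of (Gen10.bt i)⁆ *
            (FreeGroup.of (Gen10.sigmat (g := g)) ^ 2)⁻¹ } ∪
  { r | ∃ i : Fin g,
      r = ⁅FreeGroup.of (Gen10.a i), FreeGroup.of (Gen10.bt i)⁆ *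
            (FreeGroup.of (Gen10.zeta (g := g)))⁻¹ } ∪
  { r | ∃ i : Fin g,
      r = ⁅FreeGroup.of (Gen10.at_ i), FreeGroup.of (Gen10.b i)⁆ *
            (FreeGroup.of (Gen10.zeta (g := g)))⁻¹ }


-- generator images and relator check
variable {g : ℕ}

open Mo in
/-- images of the generators in the model group -/
def f0 : Gen10 g → Mo g
  | .sigma => ⟨0,0,0,0,1,0,0⟩
  | .sigmat => ⟨0,0,0,0,0,1,0⟩
  | .zeta => ⟨0,0,0,0,0,0,1⟩
  | .a i => ⟨Pi.single i 1,0,0,0,0,0,0⟩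
  | .b i => ⟨0,Pi.single i 1,0,0,0,0,0⟩
  | .at_ i => ⟨0,0,Pi.single i 1,0,0,0,0⟩
  | .bt i => ⟨0,0,0,Pi.single i 1,0,0,0⟩

set_option maxHeartbeats 2000000 in
lemma lift_rels_one : ∀ r ∈ rels10 g, FreeGroup.lift f0 r = 1 := by
  intro r hr
  rcases hr with ((((⟨x, y, hxy, hne, rfl⟩ | ⟨i, rfl⟩) | ⟨i, rfl⟩) | ⟨i, rfl⟩) | ⟨i, rfl⟩)
  · simp only [map_commutatorElement, FreeGroup.lift_apply_of]
    rw [Mo.commutator_eq]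
    cases x <;> cases y <;>
      · first
        | ((ext <;> simp [f0, Mo.one_def, dt_zero_left, dt_zero_right]); done)
        | (rename_i i j
           have hij : i ≠ j := by
             rintro rfl
             exact hne ⟨i, by tauto⟩
           ext <;>
             simp [f0, Mo.one_def, dt_zero_left, dt_zero_right, dt_single_single,
               hij, hij.symm])
  all_goals
    simp only [map_mul, map_inv, map_pow, map_commutatorElement, FreeGroup.lift_apply_of]
    simp only [Mo.commutator_eq, pow_two]
    ext <;>
      simp [f0, Mo.mul_def, Mo.one_def, Mo.inv_def, dt_zero_left, dt_zero_right,
        dt_single_single, dt_neg_left, dt_neg_right]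

section Helpers
variable {G : Type*} [Group G]

lemma cpow {x y c : G} (hc : ∀ z, Commute c z) (h : y * x = x * y * c) (m : ℤ) :
    y * x ^ m = x ^ m * y * c ^ m := by
  have hsemi : SemiconjBy y x (x * c) := by
    unfold SemiconjBy
    rw [h, mul_assoc, mul_assoc, (hc y).eq]
  have h2 := hsemi.zpow_right m
  unfold SemiconjBy at h2
  rw [((hc x).symm.mul_zpow m)] at h2
  rw [h2, mul_assoc, mul_assoc, (hc y).zpow_left m |>.eq]

lemma cpow' {x y c : G} (hc : ∀ z, Commute c z) (h : y * x = x * y * c) (m : ℤ) :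
    y ^ m * x = x * y ^ m * c ^ m := by
  have h' : x * y = y * x * c⁻¹ := by
    rw [h, mul_assoc, mul_inv_cancel, mul_one]
  have h2 := cpow (fun z => (hc z).inv_left) h' m
  rw [inv_zpow] at h2
  rw [h2]; group

lemma cpow2 {x y c : G} (hc : ∀ z, Commute c z) (h : y * x = x * y * c) (m k : ℤ) :
    y ^ m * x ^ k = x ^ k * y ^ m * c ^ (m * k) := by
  have h2 := cpow (fun z => ((hc z).zpow_left m)) (cpow' hc h m) k
  rwa [← zpow_mul] at h2

/-- pulling a central-corrected element across a block -/
lemma pull {u P corr : G} (hcorr : ∀ z, Commute corr z) (h : u * P = P * u * corr)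
    (R : G) : u * (P * R) = P * (u * R) * corr := by
  calc u * (P * R) = (u * P) * R := (mul_assoc _ _ _).symm
    _ = P * u * corr * R := by rw [h]
    _ = P * u * (R * corr) := by rw [mul_assoc, (hcorr R).eq]
    _ = P * (u * R) * corr := by group

lemma pull1 {u P : G} (h : u * P = P * u) (R : G) : u * (P * R) = P * (u * R) := by
  rw [← mul_assoc, h, mul_assoc]

/-- crossing a noncommutative product with per-factor central corrections -/
lemma cross {ι : Type*} {y c : G} (hc : ∀ z, Commute c z) (f : ι → G) (v : ι → ℤ)
    (h : ∀ j, y * f j = f j * y * c ^ v j) :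
    ∀ (s : Finset ι) (comm : (↑s : Set ι).Pairwise (Function.onFun Commute f)),
      y * s.noncommProd f comm = s.noncommProd f comm * y * c ^ (∑ j ∈ s, v j) := by
  intro s
  induction s using Finset.cons_induction with
  | empty => intro comm; simp
  | cons a s ha ih =>
    intro comm
    rw [Finset.noncommProd_cons, Finset.sum_cons]
    have comm' : (↑s : Set ι).Pairwise (Function.onFun Commute f) :=
      comm.mono (by simp [Finset.coe_cons, Set.subset_insert])
    calc y * (f a * s.noncommProd f comm')
        = (y * f a) * s.noncommProd f comm' := (mul_assoc _ _ _).symm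
      _ = f a * y * c ^ v a * s.noncommProd f comm' := by rw [h a]
      _ = f a * y * (s.noncommProd f comm' * c ^ v a) := by
          rw [mul_assoc (f a * y), ((hc _).zpow_left (v a)).eq]
      _ = f a * (y * s.noncommProd f comm') * c ^ v a := by group
      _ = f a * (s.noncommProd f comm' * y * c ^ (∑ j ∈ s, v j)) * c ^ v a := by
          rw [ih comm']
      _ = f a * s.noncommProd f comm' * y * c ^ (v a + ∑ j ∈ s, v j) := by
          rw [zpow_add]
          group
end Helpers

section Blk
variable {G : Type*} [Group G] {ι : Type*} [Fintype ι] [DecidableEq ι]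

lemma blk_comm (x : ι → G) (hx : ∀ i j, Commute (x i) (x j)) (α : ι → ℤ) :
    (↑(Finset.univ : Finset ι) : Set ι).Pairwise (Function.onFun Commute fun i => x i ^ α i) :=
  fun i _ j _ _ => (hx i j).zpow_zpow _ _

/-- product block `∏ i, x i ^ α i` for a pairwise commuting family -/
def blk (x : ι → G) (hx : ∀ i j, Commute (x i) (x j)) (α : ι → ℤ) : G :=
  Finset.univ.noncommProd (fun i => x i ^ α i)
    (blk_comm x hx α)

lemma blk_zero (x : ι → G) (hx) : blk x hx 0 = 1 := by
  rw [blk]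
  rw [Finset.noncommProd_eq_pow_card _ _ _ 1 (by simp)]
  exact one_pow _

lemma blk_front_merge (x : ι → G) (hx) (α : ι → ℤ) (i : ι) (m : ℤ) :
    x i ^ m * blk x hx α = blk x hx (α + Pi.single i m) := by
  obtain ⟨β, hβ⟩ : ∃ β : ι → ℤ, β = α + Pi.single i m := ⟨_, rfl⟩
  rw [← hβ]
  have e1 := Finset.mul_noncommProd_erase (Finset.univ) (Finset.mem_univ i)
    (fun j => x j ^ α j) (blk_comm x hx α)
  have e2 := Finset.mul_noncommProd_erase (Finset.univ) (Finset.mem_univ i)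
    (fun j => x j ^ β j) (blk_comm x hx β)
  erw [Finset.noncommProd_congr (s₁ := Finset.univ.erase i) rfl
    (g := fun j => x j ^ α j)
    (fun j hj => by
      have hji : j ≠ i := Finset.ne_of_mem_erase hj
      rw [hβ]
      simp [Pi.single_apply, hji])] at e2
  rw [blk, ← e1, blk, ← e2, ← mul_assoc, ← zpow_add]
  congr 2
  rw [hβ]
  simp [add_comm]

lemma blk_cross {y c : G} (hc : ∀ z, Commute c z) (x : ι → G) (hx) (w : ι → ℤ)
    (h : ∀ j, y * x j = x j * y * c ^ w j) (α : ι → ℤ) :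
    y * blk x hx α = blk x hx α * y * c ^ (∑ j, w j * α j) := by
  unfold blk
  exact cross hc _ _ (fun j => by
    have := cpow (fun z => (hc z).zpow_left (w j)) (h j) (α j)
    rwa [← zpow_mul] at this) _ _

lemma blk_commute {y : G} (x : ι → G) (hx) (h : ∀ j, Commute y (x j)) (α : ι → ℤ) :
    y * blk x hx α = blk x hx α * y :=
  ((Finset.noncommProd_commute _ _ _ _ (fun j _ => (h j).zpow_right (α j))).eq)
end Blk

namespace Stmt10
open Gen10 PresentedGroup

variable {g : ℕ}

abbrev H (g : ℕ) := PresentedGroup (rels10 g)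

/-- the subgroup generated by the three central generators -/
def C (g : ℕ) : Subgroup (H g) :=
  Subgroup.closure {PresentedGroup.of Gen10.sigma, PresentedGroup.of Gen10.sigmat,
    PresentedGroup.of Gen10.zeta}

lemma mk_rel_one {r : FreeGroup (Gen10 g)} (hr : r ∈ rels10 g) :
    PresentedGroup.mk (rels10 g) r = 1 := by
  change (QuotientGroup.mk r : H g) = 1
  rw [QuotientGroup.eq_one_iff]
  exact Subgroup.subset_normalClosure hr

lemma of_eq_mk (x : Gen10 g) :
    (PresentedGroup.of x : H g) = PresentedGroup.mk (rels10 g) (FreeGroup.of x) := rfl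

lemma comm_of {x y : Gen10 g} (hxy : x ≠ y) (hne : ¬ Gen10.exceptional x y) :
    Commute (PresentedGroup.of x : H g) (PresentedGroup.of y) := by
  rw [← commutatorElement_eq_one_iff_commute]
  have h := mk_rel_one (g := g) (Or.inl (Or.inl (Or.inl (Or.inl ⟨x, y, hxy, hne, rfl⟩))))
  rw [map_commutatorElement] at h
  exact h

lemma rel_ab (i : Fin g) :
    ⁅(PresentedGroup.of (a i) : H g), PresentedGroup.of (rels := rels10 g) (b i)⁆ =
      PresentedGroup.of Gen10.sigma ^ (2:ℕ) := by
  have h := mk_rel_one (g := g) (Or.inl (Or.inl (Or.inl (Or.inr ⟨i, rfl⟩))))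
  rw [map_mul, map_inv, map_pow, map_commutatorElement, mul_inv_eq_one] at h
  exact h

lemma rel_atbt (i : Fin g) :
    ⁅(PresentedGroup.of (at_ i) : H g), PresentedGroup.of (rels := rels10 g) (bt i)⁆ =
      PresentedGroup.of Gen10.sigmat ^ (2:ℕ) := by
  have h := mk_rel_one (g := g) (Or.inl (Or.inl (Or.inr ⟨i, rfl⟩)))
  rw [map_mul, map_inv, map_pow, map_commutatorElement, mul_inv_eq_one] at h
  exact h

lemma rel_abt (i : Fin g) :
    ⁅(PresentedGroup.of (a i) : H g), PresentedGroup.of (rels := rels10 g) (bt i)⁆ =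
      PresentedGroup.of Gen10.zeta := by
  have h := mk_rel_one (g := g) (Or.inl (Or.inr ⟨i, rfl⟩))
  rw [map_mul, map_inv, map_commutatorElement, mul_inv_eq_one] at h
  exact h

lemma rel_atb (i : Fin g) :
    ⁅(PresentedGroup.of (at_ i) : H g), PresentedGroup.of (rels := rels10 g) (b i)⁆ =
      PresentedGroup.of Gen10.zeta := by
  have h := mk_rel_one (g := g) (Or.inr ⟨i, rfl⟩)
  rw [map_mul, map_inv, map_commutatorElement, mul_inv_eq_one] at h
  exact h

/-- σ, σ̃, ζ commute with every generator -/
lemma comm_gen_sigma (y : Gen10 g) :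
    Commute (PresentedGroup.of Gen10.sigma : H g) (PresentedGroup.of y) := by
  by_cases h : Gen10.sigma = y
  · rw [← h]
  · exact comm_of h (by rintro ⟨k, hk⟩; rcases hk with h|h|h|h|h|h|h|h <;> simp_all)

lemma comm_gen_sigmat (y : Gen10 g) :
    Commute (PresentedGroup.of Gen10.sigmat : H g) (PresentedGroup.of y) := by
  by_cases h : Gen10.sigmat = y
  · rw [← h]
  · exact comm_of h (by rintro ⟨k, hk⟩; rcases hk with h|h|h|h|h|h|h|h <;> simp_all)

lemma comm_gen_zeta (y : Gen10 g) :
    Commute (PresentedGroup.of Gen10.zeta : H g) (PresentedGroup.of y) := by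
  by_cases h : Gen10.zeta = y
  · rw [← h]
  · exact comm_of h (by rintro ⟨k, hk⟩; rcases hk with h|h|h|h|h|h|h|h <;> simp_all)

lemma commute_all {u : H g} (h : ∀ x : Gen10 g, Commute u (PresentedGroup.of x)) :
    ∀ z : H g, Commute u z := by
  intro z
  have hz : z ∈ Subgroup.closure (Set.range (PresentedGroup.of : Gen10 g → H g)) := by
    rw [PresentedGroup.closure_range_of]; exact Subgroup.mem_top z
  refine Subgroup.closure_induction (p := fun z _ => Commute u z) ?_ ?_ ?_ ?_ hz
  · rintro x ⟨x0, rfl⟩; exact h x0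
  · exact Commute.one_right u
  · exact fun a b _ _ ha hb => ha.mul_right hb
  · exact fun a _ ha => ha.inv_right

lemma sigma_central : ∀ z : H g, Commute (PresentedGroup.of Gen10.sigma) z :=
  commute_all comm_gen_sigma
lemma sigmat_central : ∀ z : H g, Commute (PresentedGroup.of Gen10.sigmat) z :=
  commute_all comm_gen_sigmat
lemma zeta_central : ∀ z : H g, Commute (PresentedGroup.of Gen10.zeta) z :=
  commute_all comm_gen_zeta

lemma sigma_zpow_central (k : ℤ) : ∀ z : H g,
    Commute (PresentedGroup.of Gen10.sigma ^ k) z :=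
  fun z => (sigma_central z).zpow_left k
lemma sigmat_zpow_central (k : ℤ) : ∀ z : H g,
    Commute (PresentedGroup.of Gen10.sigmat ^ k) z :=
  fun z => (sigmat_central z).zpow_left k
lemma zeta_zpow_central (k : ℤ) : ∀ z : H g,
    Commute (PresentedGroup.of Gen10.zeta ^ k) z :=
  fun z => (zeta_central z).zpow_left k

/-- `[x,y] = c` with `c` central implies `y x = x y c⁻¹`. -/
lemma comm_to_rel {G : Type*} [Group G] {x y c : G} (hc : ∀ z, Commute c z)
    (h : ⁅x, y⁆ = c) : y * x = x * y * c⁻¹ := by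
  rw [commutatorElement_def] at h
  have h1 : x * y = c * (y * x) := by rw [← h]; group
  calc y * x = c⁻¹ * (x * y) := by rw [h1]; group
    _ = x * y * c⁻¹ := ((hc (x * y)).inv_left).eq

/-- `[x,y] = c` with `c` central implies `x y = y x c`. -/
lemma comm_to_rel2 {G : Type*} [Group G] {x y c : G} (hc : ∀ z, Commute c z)
    (h : ⁅x, y⁆ = c) : x * y = y * x * c := by
  rw [commutatorElement_def] at h
  have h1 : x * y = c * (y * x) := by rw [← h]; group
  rw [h1, (hc (y * x)).eq]

end Stmt10

namespace Stmt10
variable {g : ℕ}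
open Gen10

local notation "oo" => (PresentedGroup.of : Gen10 g → H g)

lemma hA : ∀ i j, Commute (oo (a i)) (oo (a j)) := fun i j => by
  by_cases h : i = j
  · rw [h]
  · exact comm_of (by simp [h])
      (by rintro ⟨k, hk⟩; rcases hk with h|h|h|h|h|h|h|h <;> simp_all)

lemma hB : ∀ i j, Commute (oo (b i)) (oo (b j)) := fun i j => by
  by_cases h : i = j
  · rw [h]
  · exact comm_of (by simp [h])
      (by rintro ⟨k, hk⟩; rcases hk with h|h|h|h|h|h|h|h <;> simp_all)

lemma hAt : ∀ i j, Commute (oo (at_ i)) (oo (at_ j)) := fun i j => by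
  by_cases h : i = j
  · rw [h]
  · exact comm_of (by simp [h])
      (by rintro ⟨k, hk⟩; rcases hk with h|h|h|h|h|h|h|h <;> simp_all)

lemma hBt : ∀ i j, Commute (oo (bt i)) (oo (bt j)) := fun i j => by
  by_cases h : i = j
  · rw [h]
  · exact comm_of (by simp [h])
      (by rintro ⟨k, hk⟩; rcases hk with h|h|h|h|h|h|h|h <;> simp_all)

lemma comm_a_at (i j : Fin g) : Commute (oo (a i)) (oo (at_ j)) :=
  comm_of (by simp)
    (by rintro ⟨k, hk⟩; rcases hk with h|h|h|h|h|h|h|h <;> simp_all)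

lemma comm_b_bt (i j : Fin g) : Commute (oo (b i)) (oo (bt j)) :=
  comm_of (by simp)
    (by rintro ⟨k, hk⟩; rcases hk with h|h|h|h|h|h|h|h <;> simp_all)

lemma rel_ba' (i j : Fin g) :
    oo (b i) * oo (a j) =
      oo (a j) * oo (b i) * oo Gen10.sigma ^ (if j = i then (-2:ℤ) else 0) := by
  by_cases h : j = i
  · subst h
    have h2 := comm_to_rel (fun z => (sigma_central z).pow_left 2) (rel_ab j)
    rw [if_pos rfl, h2]
    group
  · rw [if_neg h, zpow_zero, mul_one]
    exact (comm_of (x := b i) (y := a j) (by simp)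
      (by rintro ⟨k, hk⟩; rcases hk with h'|h'|h'|h'|h'|h'|h'|h' <;> simp_all)).eq

lemma rel_atb' (i j : Fin g) :
    oo (at_ i) * oo (b j) =
      oo (b j) * oo (at_ i) * oo Gen10.zeta ^ (if j = i then (1:ℤ) else 0) := by
  by_cases h : j = i
  · subst h
    have h2 := comm_to_rel2 zeta_central (rel_atb j)
    rw [if_pos rfl, h2]
    group
  · rw [if_neg h, zpow_zero, mul_one]
    exact (comm_of (x := at_ i) (y := b j) (by simp)
      (by rintro ⟨k, hk⟩; rcases hk with h'|h'|h'|h'|h'|h'|h'|h' <;> simp_all)).eq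

lemma rel_bta' (i j : Fin g) :
    oo (bt i) * oo (a j) =
      oo (a j) * oo (bt i) * oo Gen10.zeta ^ (if j = i then (-1:ℤ) else 0) := by
  by_cases h : j = i
  · subst h
    have h2 := comm_to_rel zeta_central (rel_abt j)
    rw [if_pos rfl, h2]
    group
  · rw [if_neg h, zpow_zero, mul_one]
    exact (comm_of (x := bt i) (y := a j) (by simp)
      (by rintro ⟨k, hk⟩; rcases hk with h'|h'|h'|h'|h'|h'|h'|h' <;> simp_all)).eq

lemma rel_btat' (i j : Fin g) :
    oo (bt i) * oo (at_ j) =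
      oo (at_ j) * oo (bt i) * oo Gen10.sigmat ^ (if j = i then (-2:ℤ) else 0) := by
  by_cases h : j = i
  · subst h
    have h2 := comm_to_rel (fun z => (sigmat_central z).pow_left 2) (rel_atbt j)
    rw [if_pos rfl, h2]
    group
  · rw [if_neg h, zpow_zero, mul_one]
    exact (comm_of (x := bt i) (y := at_ j) (by simp)
      (by rintro ⟨k, hk⟩; rcases hk with h'|h'|h'|h'|h'|h'|h'|h' <;> simp_all)).eq

/-! ### blocks -/

def A (α : Fin g → ℤ) : H g := blk (fun i => oo (a i)) hA α
def B (β : Fin g → ℤ) : H g := blk (fun i => oo (b i)) hB β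
def At (γ : Fin g → ℤ) : H g := blk (fun i => oo (at_ i)) hAt γ
def Bt (δ : Fin g → ℤ) : H g := blk (fun i => oo (bt i)) hBt δ

def NF (α β γ δ : Fin g → ℤ) : H g := A α * (B β * (At γ * Bt δ))

lemma sum_ite_helper (i : Fin g) (w : ℤ) (m : ℤ) (α : Fin g → ℤ) :
    (∑ j, ((if j = i then w else 0) * m) * α j) = w * m * α i := by
  rw [Finset.sum_congr rfl (g := fun j => if j = i then w * m * α j else 0)
    (fun j _ => by by_cases h : j = i <;> simp [h])]
  simp [Finset.sum_ite_eq']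

lemma cross_bA (i : Fin g) (m : ℤ) (α : Fin g → ℤ) :
    oo (b i) ^ m * A α = A α * oo (b i) ^ m * oo Gen10.sigma ^ (-2 * m * α i) := by
  have h := blk_cross (y := oo (b i) ^ m) (c := oo Gen10.sigma) sigma_central
    (fun j => oo (a j)) hA (fun j => (if j = i then (-2:ℤ) else 0) * m)
    (fun j => by
      have h2 := cpow' (fun z => (sigma_central z).zpow_left _) (rel_ba' i j) m
      rwa [← zpow_mul] at h2) α
  rw [A, h, sum_ite_helper]

lemma cross_atB (i : Fin g) (m : ℤ) (β : Fin g → ℤ) :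
    oo (at_ i) ^ m * B β = B β * oo (at_ i) ^ m * oo Gen10.zeta ^ (m * β i) := by
  have h := blk_cross (y := oo (at_ i) ^ m) (c := oo Gen10.zeta) zeta_central
    (fun j => oo (b j)) hB (fun j => (if j = i then (1:ℤ) else 0) * m)
    (fun j => by
      have h2 := cpow' (fun z => (zeta_central z).zpow_left _) (rel_atb' i j) m
      rwa [← zpow_mul] at h2) β
  rw [B, h, sum_ite_helper, one_mul]

lemma cross_btA (i : Fin g) (m : ℤ) (α : Fin g → ℤ) :
    oo (bt i) ^ m * A α = A α * oo (bt i) ^ m * oo Gen10.zeta ^ (-m * α i) := by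
  have h := blk_cross (y := oo (bt i) ^ m) (c := oo Gen10.zeta) zeta_central
    (fun j => oo (a j)) hA (fun j => (if j = i then (-1:ℤ) else 0) * m)
    (fun j => by
      have h2 := cpow' (fun z => (zeta_central z).zpow_left _) (rel_bta' i j) m
      rwa [← zpow_mul] at h2) α
  rw [A, h, sum_ite_helper]
  norm_num

lemma cross_btAt (i : Fin g) (m : ℤ) (γ : Fin g → ℤ) :
    oo (bt i) ^ m * At γ = At γ * oo (bt i) ^ m * oo Gen10.sigmat ^ (-2 * m * γ i) := by
  have h := blk_cross (y := oo (bt i) ^ m) (c := oo Gen10.sigmat) sigmat_central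
    (fun j => oo (at_ j)) hAt (fun j => (if j = i then (-2:ℤ) else 0) * m)
    (fun j => by
      have h2 := cpow' (fun z => (sigmat_central z).zpow_left _) (rel_btat' i j) m
      rwa [← zpow_mul] at h2) γ
  rw [At, h, sum_ite_helper]

lemma cross_atA (i : Fin g) (m : ℤ) (α : Fin g → ℤ) :
    oo (at_ i) ^ m * A α = A α * oo (at_ i) ^ m :=
  blk_commute _ hA (fun j => ((comm_a_at j i).symm).zpow_left m) α

lemma cross_btB (i : Fin g) (m : ℤ) (β : Fin g → ℤ) :
    oo (bt i) ^ m * B β = B β * oo (bt i) ^ m :=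
  blk_commute _ hB (fun j => ((comm_b_bt j i).symm).zpow_left m) β

lemma merge_A (α : Fin g → ℤ) (i : Fin g) (m : ℤ) :
    oo (a i) ^ m * A α = A (α + Pi.single i m) := blk_front_merge _ hA α i m
lemma merge_B (β : Fin g → ℤ) (i : Fin g) (m : ℤ) :
    oo (b i) ^ m * B β = B (β + Pi.single i m) := blk_front_merge _ hB β i m
lemma merge_At (γ : Fin g → ℤ) (i : Fin g) (m : ℤ) :
    oo (at_ i) ^ m * At γ = At (γ + Pi.single i m) := blk_front_merge _ hAt γ i m
lemma merge_Bt (δ : Fin g → ℤ) (i : Fin g) (m : ℤ) :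
    oo (bt i) ^ m * Bt δ = Bt (δ + Pi.single i m) := blk_front_merge _ hBt δ i m

lemma A_zero : (A 0 : H g) = 1 := blk_zero _ hA
lemma B_zero : (B 0 : H g) = 1 := blk_zero _ hB
lemma At_zero : (At 0 : H g) = 1 := blk_zero _ hAt
lemma Bt_zero : (Bt 0 : H g) = 1 := blk_zero _ hBt

lemma mem_C_sigma : (oo Gen10.sigma) ∈ C g := Subgroup.subset_closure (by simp)
lemma mem_C_sigmat : (oo Gen10.sigmat) ∈ C g := Subgroup.subset_closure (by simp)
lemma mem_C_zeta : (oo Gen10.zeta) ∈ C g := Subgroup.subset_closure (by simp)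

/-! ### left multiplication by a generator power preserves normal forms -/

lemma step_master (x0 : Gen10 g) (m : ℤ) (α β γ δ : Fin g → ℤ) (c : H g) (hc : c ∈ C g) :
    ∃ α' β' γ' δ' c', c' ∈ C g ∧
      oo x0 ^ m * (NF α β γ δ * c) = NF α' β' γ' δ' * c' := by
  cases x0 with
  | sigma =>
    refine ⟨α, β, γ, δ, oo Gen10.sigma ^ m * c,
      mul_mem (zpow_mem mem_C_sigma m) hc, ?_⟩
    rw [← mul_assoc, (sigma_zpow_central m (NF α β γ δ)).eq, mul_assoc]
  | sigmat =>
    refine ⟨α, β, γ, δ, oo Gen10.sigmat ^ m * c,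
      mul_mem (zpow_mem mem_C_sigmat m) hc, ?_⟩
    rw [← mul_assoc, (sigmat_zpow_central m (NF α β γ δ)).eq, mul_assoc]
  | zeta =>
    refine ⟨α, β, γ, δ, oo Gen10.zeta ^ m * c,
      mul_mem (zpow_mem mem_C_zeta m) hc, ?_⟩
    rw [← mul_assoc, (zeta_zpow_central m (NF α β γ δ)).eq, mul_assoc]
  | a i =>
    refine ⟨α + Pi.single i m, β, γ, δ, c, hc, ?_⟩
    rw [NF, NF, ← mul_assoc, ← mul_assoc, merge_A]
  | b i =>
    refine ⟨α, β + Pi.single i m, γ, δ, oo Gen10.sigma ^ (-2 * m * α i) * c,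
      mul_mem (zpow_mem mem_C_sigma _) hc, ?_⟩
    rw [NF, NF]
    rw [← mul_assoc, pull (sigma_zpow_central _) (cross_bA i m α) (B β * (At γ * Bt δ))]
    rw [← mul_assoc (oo (b i) ^ m), merge_B]
    group
  | at_ i =>
    refine ⟨α, β, γ + Pi.single i m, δ, oo Gen10.zeta ^ (m * β i) * c,
      mul_mem (zpow_mem mem_C_zeta _) hc, ?_⟩
    rw [NF, NF]
    rw [← mul_assoc, pull1 (cross_atA i m α) (B β * (At γ * Bt δ))]
    rw [pull (zeta_zpow_central _) (cross_atB i m β) (At γ * Bt δ)]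
    rw [← mul_assoc (oo (at_ i) ^ m), merge_At]
    group
  | bt i =>
    refine ⟨α, β, γ, δ + Pi.single i m,
      oo Gen10.sigmat ^ (-2 * m * γ i) * (oo Gen10.zeta ^ (-m * α i) * c),
      mul_mem (zpow_mem mem_C_sigmat _) (mul_mem (zpow_mem mem_C_zeta _) hc), ?_⟩
    rw [NF, NF]
    rw [← mul_assoc, pull (zeta_zpow_central _) (cross_btA i m α) (B β * (At γ * Bt δ))]
    rw [pull1 (cross_btB i m β) (At γ * Bt δ)]
    rw [pull (sigmat_zpow_central _) (cross_btAt i m γ) (Bt δ)]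
    rw [merge_Bt]
    group

lemma nf_exists (x : H g) :
    ∃ α β γ δ c, c ∈ C g ∧ x = NF α β γ δ * c := by
  have hx : x ∈ Subgroup.closure (Set.range (PresentedGroup.of : Gen10 g → H g)) := by
    rw [PresentedGroup.closure_range_of]; exact Subgroup.mem_top x
  induction hx using Subgroup.closure_induction_left with
  | one =>
    exact ⟨0, 0, 0, 0, 1, one_mem _, by
      rw [NF, A_zero, B_zero, At_zero, Bt_zero]; simp⟩
  | mul_left u hu y hy ih =>
    obtain ⟨x0, rfl⟩ := hu
    obtain ⟨α, β, γ, δ, c, hc, rfl⟩ := ih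
    obtain ⟨α', β', γ', δ', c', hc', h⟩ := step_master x0 1 α β γ δ c hc
    rw [zpow_one] at h
    exact ⟨α', β', γ', δ', c', hc', h⟩
  | inv_mul_cancel u hu y hy ih =>
    obtain ⟨x0, rfl⟩ := hu
    obtain ⟨α, β, γ, δ, c, hc, rfl⟩ := ih
    obtain ⟨α', β', γ', δ', c', hc', h⟩ := step_master x0 (-1) α β γ δ c hc
    rw [zpow_neg_one] at h
    exact ⟨α', β', γ', δ', c', hc', h⟩

end Stmt10

namespace Stmt10
variable {g : ℕ}
open Gen10 Multiplicative

local notation "oo" => (PresentedGroup.of : Gen10 g → H g)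

def φg : H g →* Mo g := PresentedGroup.toGroup lift_rels_one

lemma φ_of (x : Gen10 g) : φg (oo x) = f0 x := PresentedGroup.toGroup.of lift_rels_one

/-- projections onto the four vector components -/
def pa : Mo g →* Multiplicative (Fin g → ℤ) where
  toFun X := ofAdd X.a
  map_one' := rfl
  map_mul' _ _ := rfl

def pb : Mo g →* Multiplicative (Fin g → ℤ) where
  toFun X := ofAdd X.b
  map_one' := rfl
  map_mul' _ _ := rfl

def pc : Mo g →* Multiplicative (Fin g → ℤ) where
  toFun X := ofAdd X.c
  map_one' := rfl
  map_mul' _ _ := rfl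

def pd : Mo g →* Multiplicative (Fin g → ℤ) where
  toFun X := ofAdd X.d
  map_one' := rfl
  map_mul' _ _ := rfl

lemma prod_single (α : Fin g → ℤ) :
    (∏ i, ofAdd (Pi.single i (1:ℤ)) ^ α i) = ofAdd α := by
  apply Multiplicative.toAdd.injective
  rw [toAdd_prod]
  simp only [toAdd_zpow, toAdd_ofAdd]
  have : ∀ i : Fin g, α i • (Pi.single i (1:ℤ) : Fin g → ℤ) = Pi.single i (α i) := by
    intro i
    funext j
    simp [Pi.single_apply]
  simp only [this]
  exact Finset.univ_sum_single α

lemma proj_blk_match (p : Mo g →* Multiplicative (Fin g → ℤ)) (x : Fin g → Gen10 g) (hx)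
    (h : ∀ j, p (f0 (x j)) = ofAdd (Pi.single j 1)) (v : Fin g → ℤ) :
    p (φg (blk (fun j => oo (x j)) hx v)) = ofAdd v := by
  rw [blk, ← MonoidHom.comp_apply, Finset.map_noncommProd _ _ _ (p.comp φg)]
  rw [Finset.noncommProd_eq_prod]
  calc (∏ i, (p.comp φg) (oo (x i) ^ v i))
      = ∏ i, ofAdd (Pi.single i (1:ℤ)) ^ v i := by
        refine Finset.prod_congr rfl fun i _ => ?_
        rw [map_zpow, MonoidHom.comp_apply, φ_of, h i]
    _ = ofAdd v := prod_single v

lemma proj_blk_miss (p : Mo g →* Multiplicative (Fin g → ℤ)) (x : Fin g → Gen10 g) (hx)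
    (h : ∀ j, p (f0 (x j)) = 1) (v : Fin g → ℤ) :
    p (φg (blk (fun j => oo (x j)) hx v)) = 1 := by
  rw [blk, ← MonoidHom.comp_apply, Finset.map_noncommProd _ _ _ (p.comp φg)]
  exact (Finset.noncommProd_eq_pow_card _ _ _ 1 (fun j _ => by
    rw [map_zpow, MonoidHom.comp_apply, φ_of, h j, one_zpow])).trans
    (one_pow _)

lemma proj_C (p : Mo g →* Multiplicative (Fin g → ℤ))
    (h1 : p (f0 (Gen10.sigma (g := g))) = 1) (h2 : p (f0 (Gen10.sigmat (g := g))) = 1)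
    (h3 : p (f0 (Gen10.zeta (g := g))) = 1) {c : H g} (hc : c ∈ C g) :
    p (φg c) = 1 := by
  have hle : C g ≤ MonoidHom.ker (p.comp φg) := by
    rw [C, Subgroup.closure_le]
    rintro u hu
    rcases hu with rfl | rfl | rfl <;>
      simp only [SetLike.mem_coe, MonoidHom.mem_ker, MonoidHom.comp_apply, φ_of,
        h1, h2, h3]
  simpa [MonoidHom.mem_ker] using hle hc

lemma pa_NF (α β γ δ : Fin g → ℤ) {c : H g} (hc : c ∈ C g) :
    pa (φg (NF α β γ δ * c)) = ofAdd α := by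
  simp only [NF, map_mul]
  rw [A, B, At, Bt]
  rw [    proj_blk_match pa Gen10.a hA (fun j => rfl) α,
    proj_blk_miss pa Gen10.b hB (fun j => rfl) β,
    proj_blk_miss pa Gen10.at_ hAt (fun j => rfl) γ,
    proj_blk_miss pa Gen10.bt hBt (fun j => rfl) δ,
    proj_C pa rfl rfl rfl hc]
  simp

lemma pb_NF (α β γ δ : Fin g → ℤ) {c : H g} (hc : c ∈ C g) :
    pb (φg (NF α β γ δ * c)) = ofAdd β := by
  simp only [NF, map_mul]
  rw [A, B, At, Bt]
  rw [    proj_blk_miss pb Gen10.a hA (fun j => rfl) α,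
    proj_blk_match pb Gen10.b hB (fun j => rfl) β,
    proj_blk_miss pb Gen10.at_ hAt (fun j => rfl) γ,
    proj_blk_miss pb Gen10.bt hBt (fun j => rfl) δ,
    proj_C pb rfl rfl rfl hc]
  simp

lemma pc_NF (α β γ δ : Fin g → ℤ) {c : H g} (hc : c ∈ C g) :
    pc (φg (NF α β γ δ * c)) = ofAdd γ := by
  simp only [NF, map_mul]
  rw [A, B, At, Bt]
  rw [    proj_blk_miss pc Gen10.a hA (fun j => rfl) α,
    proj_blk_miss pc Gen10.b hB (fun j => rfl) β,
    proj_blk_match pc Gen10.at_ hAt (fun j => rfl) γ,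
    proj_blk_miss pc Gen10.bt hBt (fun j => rfl) δ,
    proj_C pc rfl rfl rfl hc]
  simp

lemma pd_NF (α β γ δ : Fin g → ℤ) {c : H g} (hc : c ∈ C g) :
    pd (φg (NF α β γ δ * c)) = ofAdd δ := by
  simp only [NF, map_mul]
  rw [A, B, At, Bt]
  rw [    proj_blk_miss pd Gen10.a hA (fun j => rfl) α,
    proj_blk_miss pd Gen10.b hB (fun j => rfl) β,
    proj_blk_miss pd Gen10.at_ hAt (fun j => rfl) γ,
    proj_blk_match pd Gen10.bt hBt (fun j => rfl) δ,
    proj_C pd rfl rfl rfl hc]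
  simp

lemma center_vec_zero {x : H g} (hx : x ∈ Subgroup.center (H g)) :
    (φg x).a = 0 ∧ (φg x).b = 0 ∧ (φg x).c = 0 ∧ (φg x).d = 0 := by
  have key : ∀ u : Gen10 g, f0 u * φg x = φg x * f0 u := by
    intro u
    have h := (Subgroup.mem_center_iff.mp hx) (oo u)
    have h2 := congrArg φg h
    rw [map_mul, map_mul, φ_of] at h2
    exact h2
  refine ⟨funext fun i => ?_, funext fun i => ?_, funext fun i => ?_, funext fun i => ?_⟩
  · have hs := congrArg Mo.s (key (Gen10.b i))
    simp [Mo.mul_def, f0, dt_zero_left, dt_zero_right, dt_single_left, dt_single_right] at hs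
    simpa using hs
  · have hs := congrArg Mo.s (key (Gen10.a i))
    simp [Mo.mul_def, f0, dt_zero_left, dt_zero_right, dt_single_left, dt_single_right] at hs
    simpa using hs.symm
  · have hz := congrArg Mo.z (key (Gen10.b i))
    simp [Mo.mul_def, f0, dt_zero_left, dt_zero_right, dt_single_left, dt_single_right] at hz
    simpa using hz
  · have hz := congrArg Mo.z (key (Gen10.a i))
    simp [Mo.mul_def, f0, dt_zero_left, dt_zero_right, dt_single_left, dt_single_right] at hz
    simpa using hz.symm

def ι3 : Multiplicative (ℤ × ℤ × ℤ) →* Mo g where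
  toFun v := ⟨0, 0, 0, 0, v.toAdd.1, v.toAdd.2.1, v.toAdd.2.2⟩
  map_one' := rfl
  map_mul' v w := by
    ext <;> simp [Mo.mul_def, dt_zero_left]

end Stmt10

open Stmt10 in
/-- The center of the presented group `H` is the free abelian group of rank 3
generated by `σ`, `σ̃` and `ζ`. -/
theorem stmt_10 (g : ℕ) (hg : 1 ≤ g) :
    Subgroup.center (PresentedGroup (rels10 g)) =
      Subgroup.closure {PresentedGroup.of Gen10.sigma, PresentedGroup.of Gen10.sigmat,
        PresentedGroup.of Gen10.zeta} ∧
    (∀ m n p : ℤ, (PresentedGroup.of (rels := rels10 g) Gen10.sigma) ^ m *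
        (PresentedGroup.of (rels := rels10 g) Gen10.sigmat) ^ n *
        (PresentedGroup.of (rels := rels10 g) Gen10.zeta) ^ p = 1 →
        m = 0 ∧ n = 0 ∧ p = 0) := by
  constructor
  · apply le_antisymm
    · intro x hx
      obtain ⟨α, β, γ, δ, c, hc, rfl⟩ := nf_exists x
      obtain ⟨ha, hb, hc2, hd⟩ := center_vec_zero hx
      have hα : α = 0 := by
        have h1 := pa_NF α β γ δ hc
        rw [show pa (φg (NF α β γ δ * c)) =
          Multiplicative.ofAdd ((φg (NF α β γ δ * c)).a) from rfl, ha] at h1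
        exact (Multiplicative.ofAdd.injective h1).symm
      have hβ : β = 0 := by
        have h1 := pb_NF α β γ δ hc
        rw [show pb (φg (NF α β γ δ * c)) =
          Multiplicative.ofAdd ((φg (NF α β γ δ * c)).b) from rfl, hb] at h1
        exact (Multiplicative.ofAdd.injective h1).symm
      have hγ : γ = 0 := by
        have h1 := pc_NF α β γ δ hc
        rw [show pc (φg (NF α β γ δ * c)) =
          Multiplicative.ofAdd ((φg (NF α β γ δ * c)).c) from rfl, hc2] at h1
        exact (Multiplicative.ofAdd.injective h1).symm
      have hδ : δ = 0 := by
        have h1 := pd_NF α β γ δ hc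
        rw [show pd (φg (NF α β γ δ * c)) =
          Multiplicative.ofAdd ((φg (NF α β γ δ * c)).d) from rfl, hd] at h1
        exact (Multiplicative.ofAdd.injective h1).symm
      rw [hα, hβ, hγ, hδ, NF, A_zero, B_zero, At_zero, Bt_zero]
      simpa [C] using hc
    · refine (Subgroup.closure_le _).mpr ?_
      rintro u hu
      simp only [Set.mem_insert_iff, Set.mem_singleton_iff] at hu
      rcases hu with rfl | rfl | rfl
      · exact Subgroup.mem_center_iff.mpr fun z => ((sigma_central z).symm).eq
      · exact Subgroup.mem_center_iff.mpr fun z => ((sigmat_central z).symm).eq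
      · exact Subgroup.mem_center_iff.mpr fun z => ((zeta_central z).symm).eq
  · intro m n p h
    have h2 := congrArg φg h
    rw [map_mul, map_mul, map_zpow, map_zpow, map_zpow, φ_of, φ_of, φ_of, map_one] at h2
    have e1 : (f0 (Gen10.sigma) : Mo g) ^ m = ι3 (Multiplicative.ofAdd (m, 0, 0)) := by
      rw [show (f0 (Gen10.sigma (g := g)) : Mo g) =
        ι3 (Multiplicative.ofAdd ((1:ℤ), (0:ℤ), (0:ℤ))) from rfl, ← map_zpow]
      congr 1
      rw [← ofAdd_zsmul]
      have : m • ((1:ℤ), (0:ℤ), (0:ℤ)) = (m, 0, 0) := by simp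
      rw [this]
    have e2 : (f0 (Gen10.sigmat) : Mo g) ^ n = ι3 (Multiplicative.ofAdd (0, n, 0)) := by
      rw [show (f0 (Gen10.sigmat (g := g)) : Mo g) =
        ι3 (Multiplicative.ofAdd ((0:ℤ), (1:ℤ), (0:ℤ))) from rfl, ← map_zpow]
      congr 1
      rw [← ofAdd_zsmul]
      have : n • ((0:ℤ), (1:ℤ), (0:ℤ)) = (0, n, 0) := by simp
      rw [this]
    have e3 : (f0 (Gen10.zeta) : Mo g) ^ p = ι3 (Multiplicative.ofAdd (0, 0, p)) := by
      rw [show (f0 (Gen10.zeta (g := g)) : Mo g) =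
        ι3 (Multiplicative.ofAdd ((0:ℤ), (0:ℤ), (1:ℤ))) from rfl, ← map_zpow]
      congr 1
      rw [← ofAdd_zsmul]
      have : p • ((0:ℤ), (0:ℤ), (1:ℤ)) = (0, 0, p) := by simp
      rw [this]
    rw [e1, e2, e3, ← map_mul, ← map_mul, ← ofAdd_add, ← ofAdd_add] at h2
    have hmnp : ((m, 0, 0) : ℤ × ℤ × ℤ) + (0, n, 0) + (0, 0, p) = (m, n, p) := by
      simp [Prod.ext_iff]
    rw [hmnp] at h2
    have hfin : (⟨0, 0, 0, 0, m, n, p⟩ : Mo g) = 1 := h2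
    exact ⟨congrArg Mo.s hfin, congrArg Mo.t hfin, congrArg Mo.z hfin⟩
end

section
/- Let H be the group with presentation as in: generators σ, σ̃, ζ and a_i, b_i, ã_i, b̃_i for i = 1,…,g (g ≥ 1); relations: all pairs of distinct generators commute except {a_i, b_i}, {ã_i, b̃_i}, {b_i, ã_i}, {a_i, b̃_i}; [a_i, b_i] = σ², [ã_i, b̃_i] = σ̃², [a_i, b̃_i] = [ã_i, b_i] = ζ. Then every element of H has a unique expression σ^p σ̃^q ζ^r ∏_i a_i^{m_i} ã_i^{m̃_i} ∏_i b_i^{n_i} b̃_i^{ñ_i}, so H ≅ (ℤ³ × ℤ^{2g}) ⋊ ℤ^{2g}. -/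
/-- Generators: `σ`, `σ̃`, `ζ`, and `aᵢ`, `bᵢ`, `ãᵢ`, `b̃ᵢ` for `i = 1, …, g`. -/
inductive Gen11 (g : ℕ)
  | sigma : Gen11 g
  | sigmat : Gen11 g
  | zeta : Gen11 g
  | a : Fin g → Gen11 g
  | b : Fin g → Gen11 g
  | at_ : Fin g → Gen11 g
  | bt : Fin g → Gen11 g

/-- `x` and `y` form one of the exceptional (non-commuting) pairs
`{aᵢ, bᵢ}`, `{ãᵢ, b̃ᵢ}`, `{bᵢ, ãᵢ}`, `{aᵢ, b̃ᵢ}`. -/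
def Gen11.exceptional {g : ℕ} (x y : Gen11 g) : Prop :=
  ∃ i : Fin g,
    (x = .a i ∧ y = .b i) ∨ (x = .b i ∧ y = .a i) ∨
    (x = .at_ i ∧ y = .bt i) ∨ (x = .bt i ∧ y = .at_ i) ∨
    (x = .b i ∧ y = .at_ i) ∨ (x = .at_ i ∧ y = .b i) ∨
    (x = .a i ∧ y = .bt i) ∨ (x = .bt i ∧ y = .a i)

open scoped commutatorElement

/-- The defining relators: all pairs of distinct generators commute except the
exceptional pairs, and `[aᵢ,bᵢ] = σ²`, `[ãᵢ,b̃ᵢ] = σ̃²`, `[aᵢ,b̃ᵢ] = [ãᵢ,bᵢ] = ζ`. -/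
def rels11 (g : ℕ) : Set (FreeGroup (Gen11 g)) :=
  { r | ∃ x y : Gen11 g, x ≠ y ∧ ¬ Gen11.exceptional x y ∧
      r = ⁅FreeGroup.of x, FreeGroup.of y⁆ } ∪
  { r | ∃ i : Fin g,
      r = ⁅FreeGroup.of (Gen11.a i), FreeGroup.of (Gen11.b i)⁆ *
            (FreeGroup.of (Gen11.sigma (g := g)) ^ 2)⁻¹ } ∪
  { r | ∃ i : Fin g,
      r = ⁅FreeGroup.of (Gen11.at_ i), FreeGroup.of (Gen11.bt i)⁆ *
            (FreeGroup.of (Gen11.sigmat (g := g)) ^ 2)⁻¹ } ∪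
  { r | ∃ i : Fin g,
      r = ⁅FreeGroup.of (Gen11.a i), FreeGroup.of (Gen11.bt i)⁆ *
            (FreeGroup.of (Gen11.zeta (g := g)))⁻¹ } ∪
  { r | ∃ i : Fin g,
      r = ⁅FreeGroup.of (Gen11.at_ i), FreeGroup.of (Gen11.b i)⁆ *
            (FreeGroup.of (Gen11.zeta (g := g)))⁻¹ }

namespace S11

/-! ### The model group: `(ℤ³ × ℤ^{2g}) ⋊ ℤ^{2g}` with explicit cocycle multiplication -/

@[ext] structure M (g : ℕ) where
  p : ℤ
  q : ℤ
  r : ℤ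
  m : Fin g → ℤ
  mt : Fin g → ℤ
  n : Fin g → ℤ
  nt : Fin g → ℤ

namespace M
variable {g : ℕ}

instance : Mul (M g) :=
  ⟨fun e f => ⟨e.p + f.p - 2 * ∑ i, e.n i * f.m i,
               e.q + f.q - 2 * ∑ i, e.nt i * f.mt i,
               e.r + f.r - ∑ i, e.n i * f.mt i - ∑ i, e.nt i * f.m i,
               e.m + f.m, e.mt + f.mt, e.n + f.n, e.nt + f.nt⟩⟩
instance : One (M g) := ⟨⟨0,0,0,0,0,0,0⟩⟩
instance : Inv (M g) :=
  ⟨fun e => ⟨-e.p - 2 * ∑ i, e.n i * e.m i,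
             -e.q - 2 * ∑ i, e.nt i * e.mt i,
             -e.r - ∑ i, e.n i * e.mt i - ∑ i, e.nt i * e.m i,
             -e.m, -e.mt, -e.n, -e.nt⟩⟩

@[simp] lemma mul_p (e f : M g) : (e*f).p = e.p + f.p - 2 * ∑ i, e.n i * f.m i := rfl
@[simp] lemma mul_q (e f : M g) : (e*f).q = e.q + f.q - 2 * ∑ i, e.nt i * f.mt i := rfl
@[simp] lemma mul_r (e f : M g) : (e*f).r = e.r + f.r - ∑ i, e.n i * f.mt i - ∑ i, e.nt i * f.m i := rfl
@[simp] lemma mul_m (e f : M g) : (e*f).m = e.m + f.m := rfl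
@[simp] lemma mul_mt (e f : M g) : (e*f).mt = e.mt + f.mt := rfl
@[simp] lemma mul_n (e f : M g) : (e*f).n = e.n + f.n := rfl
@[simp] lemma mul_nt (e f : M g) : (e*f).nt = e.nt + f.nt := rfl
@[simp] lemma one_p : (1 : M g).p = 0 := rfl
@[simp] lemma one_q : (1 : M g).q = 0 := rfl
@[simp] lemma one_r : (1 : M g).r = 0 := rfl
@[simp] lemma one_m : (1 : M g).m = 0 := rfl
@[simp] lemma one_mt : (1 : M g).mt = 0 := rfl
@[simp] lemma one_n : (1 : M g).n = 0 := rfl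
@[simp] lemma one_nt : (1 : M g).nt = 0 := rfl
@[simp] lemma inv_p (e : M g) : (e⁻¹).p = -e.p - 2 * ∑ i, e.n i * e.m i := rfl
@[simp] lemma inv_q (e : M g) : (e⁻¹).q = -e.q - 2 * ∑ i, e.nt i * e.mt i := rfl
@[simp] lemma inv_r (e : M g) : (e⁻¹).r = -e.r - ∑ i, e.n i * e.mt i - ∑ i, e.nt i * e.m i := rfl
@[simp] lemma inv_m (e : M g) : (e⁻¹).m = -e.m := rfl
@[simp] lemma inv_mt (e : M g) : (e⁻¹).mt = -e.mt := rfl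
@[simp] lemma inv_n (e : M g) : (e⁻¹).n = -e.n := rfl
@[simp] lemma inv_nt (e : M g) : (e⁻¹).nt = -e.nt := rfl

instance : Group (M g) where
  mul_assoc e f h := by
    ext <;>
      simp [Pi.add_apply, add_mul, mul_add, Finset.sum_add_distrib, Finset.mul_sum] <;> ring
  one_mul e := by ext <;> simp
  mul_one e := by ext <;> simp
  inv_mul_cancel e := by
    ext <;> simp [Pi.add_apply] <;> ring

/-- Scaling, i.e. the `k`-th power when the cocycle terms vanish. -/
def sc (k : ℤ) (e : M g) : M g :=
  ⟨k * e.p, k * e.q, k * e.r, fun i => k * e.m i, fun i => k * e.mt i,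
   fun i => k * e.n i, fun i => k * e.nt i⟩

lemma zpow_right (e : M g) (h1 : e.n = 0) (h2 : e.nt = 0) (k : ℤ) :
    e ^ k = sc k e := by
  induction k using Int.induction_on with
  | zero => ext <;> simp [sc]
  | succ k ih =>
      rw [zpow_add_one, ih]
      ext <;> simp [sc, h1, h2, Pi.add_apply] <;> ring
  | pred k ih =>
      rw [zpow_sub_one, ih]
      have hinv : e⁻¹ = sc (-1) e := by
        ext <;> simp [sc, h1, h2] <;> ring
      rw [hinv]
      ext <;> simp [sc, h1, h2, Pi.add_apply] <;> ring

lemma zpow_left (e : M g) (h1 : e.m = 0) (h2 : e.mt = 0) (k : ℤ) :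
    e ^ k = sc k e := by
  induction k using Int.induction_on with
  | zero => ext <;> simp [sc]
  | succ k ih =>
      rw [zpow_add_one, ih]
      ext <;> simp [sc, h1, h2, Pi.add_apply] <;> ring
  | pred k ih =>
      rw [zpow_sub_one, ih]
      have hinv : e⁻¹ = sc (-1) e := by
        ext <;> simp [sc, h1, h2] <;> ring
      rw [hinv]
      ext <;> simp [sc, h1, h2, Pi.add_apply] <;> ring

lemma list_prod_right (F : Fin g → M g) (h : ∀ i, (F i).n = 0 ∧ (F i).nt = 0) :
    ∀ l : List (Fin g),
      (l.map F).prod =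
        ⟨(l.map fun i => (F i).p).sum, (l.map fun i => (F i).q).sum,
         (l.map fun i => (F i).r).sum, (l.map fun i => (F i).m).sum,
         (l.map fun i => (F i).mt).sum, 0, 0⟩ := by
  intro l
  induction l with
  | nil => ext <;> simp
  | cons x l ih =>
      rw [List.map_cons, List.prod_cons, ih]
      ext <;> simp [(h x).1, (h x).2, Pi.add_apply] <;> ring

lemma list_prod_left (F : Fin g → M g) (h : ∀ i, (F i).m = 0 ∧ (F i).mt = 0) :
    ∀ l : List (Fin g),
      (l.map F).prod =
        ⟨(l.map fun i => (F i).p).sum, (l.map fun i => (F i).q).sum,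
         (l.map fun i => (F i).r).sum, 0, 0, (l.map fun i => (F i).n).sum,
         (l.map fun i => (F i).nt).sum⟩ := by
  intro l
  induction l with
  | nil => ext <;> simp
  | cons x l ih =>
      rw [List.map_cons, List.prod_cons, ih]
      ext <;> simp [(h x).1, (h x).2, Pi.add_apply] <;> ring

end M

/-! ### The map to the model group -/

variable {g : ℕ}

def fmap : Gen11 g → M g
  | .sigma => ⟨1,0,0,0,0,0,0⟩
  | .sigmat => ⟨0,1,0,0,0,0,0⟩
  | .zeta => ⟨0,0,1,0,0,0,0⟩
  | .a i => ⟨0,0,0,Pi.single i 1,0,0,0⟩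
  | .at_ i => ⟨0,0,0,0,Pi.single i 1,0,0⟩
  | .b i => ⟨0,0,0,0,0,Pi.single i 1,0⟩
  | .bt i => ⟨0,0,0,0,0,0,Pi.single i 1⟩

lemma key_sum (i j : Fin g) (hij : i ≠ j) :
    ∑ k, Pi.single (M := fun _ : Fin g => ℤ) i 1 k *
      Pi.single (M := fun _ : Fin g => ℤ) j 1 k = 0 := by
  rw [Finset.sum_eq_zero]
  intro k _
  rcases eq_or_ne k i with rfl | hk
  · simp [Pi.single_apply, hij]
  · simp [Pi.single_apply, hk]

lemma sum_single_mul (i : Fin g) (v : Fin g → ℤ) :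
    ∑ k, Pi.single (M := fun _ : Fin g => ℤ) i 1 k * v k = v i := by
  rw [Finset.sum_eq_single i]
  · simp
  · intro k _ hk; simp [Pi.single_apply, hk]
  · simp

set_option maxHeartbeats 1000000 in
lemma fmap_commute (x y : Gen11 g) (hxy : x ≠ y) (hexc : ¬ Gen11.exceptional x y) :
    Commute (fmap x) (fmap y) := by
  cases x <;> cases y <;>
    first
    | (exact absurd rfl hxy)
    | (unfold Commute SemiconjBy; ext <;> simp [fmap] <;> ring)
  all_goals (
    rename_i i j
    have hij : i ≠ j := by rintro rfl; exact hexc ⟨i, by tauto⟩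
    first | exact key_sum i j hij | exact key_sum j i hij.symm)

lemma h_rels : ∀ r ∈ rels11 g, FreeGroup.lift fmap r = 1 := by
  intro r hr
  rcases hr with (((hr | hr) | hr) | hr) | hr
  · obtain ⟨x, y, hxy, hexc, rfl⟩ := hr
    rw [map_commutatorElement]
    simp only [FreeGroup.lift_apply_of]
    exact commutatorElement_eq_one_iff_commute.mpr (fmap_commute x y hxy hexc)
  all_goals (
    obtain ⟨i, rfl⟩ := hr
    rw [map_mul, map_inv, map_commutatorElement]
    simp only [map_pow, FreeGroup.lift_apply_of]
    rw [mul_inv_eq_one]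
    ext <;>
      simp [fmap, commutatorElement_def, pow_succ, sum_single_mul, mul_comm,
        Finset.mul_sum, Finset.sum_add_distrib] <;> ring)

def phi : PresentedGroup (rels11 g) →* M g := PresentedGroup.toGroup h_rels

@[simp] lemma phi_of (x : Gen11 g) : phi (PresentedGroup.of x) = fmap x :=
  PresentedGroup.toGroup.of h_rels

/-! ### Relations in the presented group -/

abbrev G (x : Gen11 g) : PresentedGroup (rels11 g) := PresentedGroup.of x

lemma rel_one {r : FreeGroup (Gen11 g)} (hr : r ∈ rels11 g) :
    (QuotientGroup.mk' (Subgroup.normalClosure (rels11 g)) r : PresentedGroup (rels11 g)) = 1 := by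
  rw [QuotientGroup.mk'_apply, QuotientGroup.eq_one_iff]
  exact Subgroup.subset_normalClosure hr

lemma comm_of {x y : Gen11 g} (hxy : x ≠ y) (hexc : ¬ Gen11.exceptional x y) :
    Commute (G x) (G y) := by
  have h := rel_one (g := g) (Or.inl (Or.inl (Or.inl (Or.inl ⟨x, y, hxy, hexc, rfl⟩))))
  rw [map_commutatorElement] at h
  exact commutatorElement_eq_one_iff_commute.mp h

lemma rel_ab (i : Fin g) : ⁅G (Gen11.a i), G (Gen11.b i)⁆ = (G (Gen11.sigma (g := g))) ^ 2 := by
  have h := rel_one (g := g) (Or.inl (Or.inl (Or.inl (Or.inr ⟨i, rfl⟩))))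
  rw [map_mul, map_inv, map_pow, map_commutatorElement, mul_inv_eq_one] at h
  exact h

lemma rel_atbt (i : Fin g) :
    ⁅G (Gen11.at_ i), G (Gen11.bt i)⁆ = (G (Gen11.sigmat (g := g))) ^ 2 := by
  have h := rel_one (g := g) (Or.inl (Or.inl (Or.inr ⟨i, rfl⟩)))
  rw [map_mul, map_inv, map_pow, map_commutatorElement, mul_inv_eq_one] at h
  exact h

lemma rel_abt (i : Fin g) : ⁅G (Gen11.a i), G (Gen11.bt i)⁆ = G (Gen11.zeta (g := g)) := by
  have h := rel_one (g := g) (Or.inl (Or.inr ⟨i, rfl⟩))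
  rw [map_mul, map_inv, map_commutatorElement, mul_inv_eq_one] at h
  exact h

lemma rel_atb (i : Fin g) : ⁅G (Gen11.at_ i), G (Gen11.b i)⁆ = G (Gen11.zeta (g := g)) := by
  have h := rel_one (g := g) (Or.inr ⟨i, rfl⟩)
  rw [map_mul, map_inv, map_commutatorElement, mul_inv_eq_one] at h
  exact h

/-! ### Centrality of σ, σ̃, ζ -/

lemma central_of {x : Gen11 g} (hx : ∀ y : Gen11 g, Commute (G x) (G y)) :
    ∀ u : PresentedGroup (rels11 g), Commute (G x) u := by
  intro u
  have hu : u ∈ Subgroup.closure (Set.range (PresentedGroup.of (rels := rels11 g))) := by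
    rw [PresentedGroup.closure_range_of]; trivial
  induction hu using Subgroup.closure_induction with
  | mem y hy => obtain ⟨t, rfl⟩ := hy; exact hx t
  | one => exact Commute.one_right _
  | mul a b _ _ ha hb => exact ha.mul_right hb
  | inv a _ ha => exact ha.inv_right

lemma cS : ∀ u : PresentedGroup (rels11 g), Commute (G (Gen11.sigma (g := g))) u :=
  central_of (by
    intro y
    rcases eq_or_ne (Gen11.sigma (g := g)) y with rfl | h
    · exact Commute.refl _
    · exact comm_of h (by
        rintro ⟨k, (⟨h1,h2⟩|⟨h1,h2⟩|⟨h1,h2⟩|⟨h1,h2⟩|⟨h1,h2⟩|⟨h1,h2⟩|⟨h1,h2⟩|⟨h1,h2⟩)⟩ <;> simp_all))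

lemma cT : ∀ u : PresentedGroup (rels11 g), Commute (G (Gen11.sigmat (g := g))) u :=
  central_of (by
    intro y
    rcases eq_or_ne (Gen11.sigmat (g := g)) y with rfl | h
    · exact Commute.refl _
    · exact comm_of h (by
        rintro ⟨k, (⟨h1,h2⟩|⟨h1,h2⟩|⟨h1,h2⟩|⟨h1,h2⟩|⟨h1,h2⟩|⟨h1,h2⟩|⟨h1,h2⟩|⟨h1,h2⟩)⟩ <;> simp_all))

lemma cZ : ∀ u : PresentedGroup (rels11 g), Commute (G (Gen11.zeta (g := g))) u :=
  central_of (by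
    intro y
    rcases eq_or_ne (Gen11.zeta (g := g)) y with rfl | h
    · exact Commute.refl _
    · exact comm_of h (by
        rintro ⟨k, (⟨h1,h2⟩|⟨h1,h2⟩|⟨h1,h2⟩|⟨h1,h2⟩|⟨h1,h2⟩|⟨h1,h2⟩|⟨h1,h2⟩|⟨h1,h2⟩)⟩ <;> simp_all))

/-! ### Commuting pairs of generators -/

lemma cAA (i j : Fin g) : Commute (G (Gen11.a i)) (G (Gen11.a j)) := by
  rcases eq_or_ne i j with rfl | hij
  · exact Commute.refl _
  · exact comm_of (by simp [hij]) (by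
      rintro ⟨k, (⟨h1,h2⟩|⟨h1,h2⟩|⟨h1,h2⟩|⟨h1,h2⟩|⟨h1,h2⟩|⟨h1,h2⟩|⟨h1,h2⟩|⟨h1,h2⟩)⟩ <;> simp_all)

lemma cAtAt (i j : Fin g) : Commute (G (Gen11.at_ i)) (G (Gen11.at_ j)) := by
  rcases eq_or_ne i j with rfl | hij
  · exact Commute.refl _
  · exact comm_of (by simp [hij]) (by
      rintro ⟨k, (⟨h1,h2⟩|⟨h1,h2⟩|⟨h1,h2⟩|⟨h1,h2⟩|⟨h1,h2⟩|⟨h1,h2⟩|⟨h1,h2⟩|⟨h1,h2⟩)⟩ <;> simp_all)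

lemma cAAt (i j : Fin g) : Commute (G (Gen11.a i)) (G (Gen11.at_ j)) :=
  comm_of (by simp) (by
    rintro ⟨k, (⟨h1,h2⟩|⟨h1,h2⟩|⟨h1,h2⟩|⟨h1,h2⟩|⟨h1,h2⟩|⟨h1,h2⟩|⟨h1,h2⟩|⟨h1,h2⟩)⟩ <;> simp_all)

lemma cBB (i j : Fin g) : Commute (G (Gen11.b i)) (G (Gen11.b j)) := by
  rcases eq_or_ne i j with rfl | hij
  · exact Commute.refl _
  · exact comm_of (by simp [hij]) (by
      rintro ⟨k, (⟨h1,h2⟩|⟨h1,h2⟩|⟨h1,h2⟩|⟨h1,h2⟩|⟨h1,h2⟩|⟨h1,h2⟩|⟨h1,h2⟩|⟨h1,h2⟩)⟩ <;> simp_all)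

lemma cBtBt (i j : Fin g) : Commute (G (Gen11.bt i)) (G (Gen11.bt j)) := by
  rcases eq_or_ne i j with rfl | hij
  · exact Commute.refl _
  · exact comm_of (by simp [hij]) (by
      rintro ⟨k, (⟨h1,h2⟩|⟨h1,h2⟩|⟨h1,h2⟩|⟨h1,h2⟩|⟨h1,h2⟩|⟨h1,h2⟩|⟨h1,h2⟩|⟨h1,h2⟩)⟩ <;> simp_all)

lemma cBBt (i j : Fin g) : Commute (G (Gen11.b i)) (G (Gen11.bt j)) :=
  comm_of (by simp) (by
    rintro ⟨k, (⟨h1,h2⟩|⟨h1,h2⟩|⟨h1,h2⟩|⟨h1,h2⟩|⟨h1,h2⟩|⟨h1,h2⟩|⟨h1,h2⟩|⟨h1,h2⟩)⟩ <;> simp_all)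

lemma cBA (i j : Fin g) (hij : i ≠ j) : Commute (G (Gen11.b i)) (G (Gen11.a j)) :=
  comm_of (by simp) (by
    rintro ⟨k, (⟨h1,h2⟩|⟨h1,h2⟩|⟨h1,h2⟩|⟨h1,h2⟩|⟨h1,h2⟩|⟨h1,h2⟩|⟨h1,h2⟩|⟨h1,h2⟩)⟩ <;> simp_all)

lemma cBAt (i j : Fin g) (hij : i ≠ j) : Commute (G (Gen11.b i)) (G (Gen11.at_ j)) :=
  comm_of (by simp) (by
    rintro ⟨k, (⟨h1,h2⟩|⟨h1,h2⟩|⟨h1,h2⟩|⟨h1,h2⟩|⟨h1,h2⟩|⟨h1,h2⟩|⟨h1,h2⟩|⟨h1,h2⟩)⟩ <;> simp_all)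

lemma cBtA (i j : Fin g) (hij : i ≠ j) : Commute (G (Gen11.bt i)) (G (Gen11.a j)) :=
  comm_of (by simp) (by
    rintro ⟨k, (⟨h1,h2⟩|⟨h1,h2⟩|⟨h1,h2⟩|⟨h1,h2⟩|⟨h1,h2⟩|⟨h1,h2⟩|⟨h1,h2⟩|⟨h1,h2⟩)⟩ <;> simp_all)

lemma cBtAt (i j : Fin g) (hij : i ≠ j) : Commute (G (Gen11.bt i)) (G (Gen11.at_ j)) :=
  comm_of (by simp) (by
    rintro ⟨k, (⟨h1,h2⟩|⟨h1,h2⟩|⟨h1,h2⟩|⟨h1,h2⟩|⟨h1,h2⟩|⟨h1,h2⟩|⟨h1,h2⟩|⟨h1,h2⟩)⟩ <;> simp_all)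

/-! ### Passing a `b`-type generator through a power -/

lemma pass_pow {Γ : Type*} [Group Γ] {A B S : Γ} (h : A * B = S * (B * A))
    (hSA : Commute S A) (k : ℤ) : B * A ^ k = S ^ (-k) * (A ^ k * B) := by
  have hBA : B * A = S⁻¹ * (A * B) := by rw [h]; group
  have hconj : B * A * B⁻¹ = S⁻¹ * A := by rw [hBA]; group
  have h2 : B * A ^ k * B⁻¹ = (S⁻¹ * A) ^ k := by rw [← hconj, conj_zpow]
  have h3 : (S⁻¹ * A) ^ k = S ^ (-k) * A ^ k := by
    rw [hSA.inv_left.mul_zpow, inv_zpow, ← zpow_neg]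
  calc B * A ^ k = (B * A ^ k * B⁻¹) * B := by group
  _ = S ^ (-k) * (A ^ k * B) := by rw [h2, h3, mul_assoc]

lemma hAB (i : Fin g) : G (Gen11.a i) * G (Gen11.b i) =
    (G (Gen11.sigma (g := g))) ^ 2 * (G (Gen11.b i) * G (Gen11.a i)) := by
  have h := rel_ab i; rw [commutatorElement_def] at h; rw [← h]; group

lemma hAtBt (i : Fin g) : G (Gen11.at_ i) * G (Gen11.bt i) =
    (G (Gen11.sigmat (g := g))) ^ 2 * (G (Gen11.bt i) * G (Gen11.at_ i)) := by
  have h := rel_atbt i; rw [commutatorElement_def] at h; rw [← h]; group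

lemma hABt (i : Fin g) : G (Gen11.a i) * G (Gen11.bt i) =
    G (Gen11.zeta (g := g)) * (G (Gen11.bt i) * G (Gen11.a i)) := by
  have h := rel_abt i; rw [commutatorElement_def] at h; rw [← h]; group

lemma hAtB (i : Fin g) : G (Gen11.at_ i) * G (Gen11.b i) =
    G (Gen11.zeta (g := g)) * (G (Gen11.b i) * G (Gen11.at_ i)) := by
  have h := rel_atb i; rw [commutatorElement_def] at h; rw [← h]; group

lemma passBA (i : Fin g) (k : ℤ) :
    G (Gen11.b i) * G (Gen11.a i) ^ k =
      ((G (Gen11.sigma (g := g))) ^ 2) ^ (-k) * (G (Gen11.a i) ^ k * G (Gen11.b i)) :=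
  pass_pow (hAB i) ((cS _).pow_left 2) k

lemma passBAt (i : Fin g) (k : ℤ) :
    G (Gen11.b i) * G (Gen11.at_ i) ^ k =
      (G (Gen11.zeta (g := g))) ^ (-k) * (G (Gen11.at_ i) ^ k * G (Gen11.b i)) :=
  pass_pow (hAtB i) (cZ _) k

lemma passBtA (i : Fin g) (k : ℤ) :
    G (Gen11.bt i) * G (Gen11.a i) ^ k =
      (G (Gen11.zeta (g := g))) ^ (-k) * (G (Gen11.a i) ^ k * G (Gen11.bt i)) :=
  pass_pow (hABt i) (cZ _) k

lemma passBtAt (i : Fin g) (k : ℤ) :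
    G (Gen11.bt i) * G (Gen11.at_ i) ^ k =
      ((G (Gen11.sigmat (g := g))) ^ 2) ^ (-k) * (G (Gen11.at_ i) ^ k * G (Gen11.bt i)) :=
  pass_pow (hAtBt i) ((cT _).pow_left 2) k

lemma pass_two {Γ : Type*} [Group Γ] {B A1 A2 z1 z2 : Γ}
    (h1 : B * A1 = z1 * (A1 * B)) (h2 : B * A2 = z2 * (A2 * B))
    (hz : Commute z2 A1) :
    B * (A1 * A2) = z1 * z2 * (A1 * A2 * B) := by
  calc B * (A1 * A2) = (B * A1) * A2 := (mul_assoc _ _ _).symm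
  _ = z1 * (A1 * B) * A2 := by rw [h1]
  _ = z1 * (A1 * (B * A2)) := by simp [mul_assoc]
  _ = z1 * (A1 * (z2 * (A2 * B))) := by rw [h2]
  _ = z1 * ((A1 * z2) * (A2 * B)) := by simp [mul_assoc]
  _ = z1 * ((z2 * A1) * (A2 * B)) := by rw [← hz.eq]
  _ = z1 * z2 * (A1 * A2 * B) := by simp [mul_assoc]

/-! ### List product lemmas -/

lemma L1 {Γ : Type*} [Group Γ] {ι : Type*} (c : Γ) (f h : ι → Γ) (j : ι) :
    ∀ l : List ι, l.Nodup → j ∈ l →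
      (∀ i ∈ l, i ≠ j → Commute c (h i)) →
      f j = c * h j → (∀ i, i ≠ j → f i = h i) →
      (l.map f).prod = c * (l.map h).prod := by
  intro l
  induction l with
  | nil => simp
  | cons x l ih =>
    intro hnd hj hc hfj hfi
    rw [List.nodup_cons] at hnd
    rw [List.map_cons, List.prod_cons, List.map_cons, List.prod_cons]
    rcases eq_or_ne x j with rfl | hxj
    · have hl : l.map f = l.map h :=
        List.map_congr_left (fun i hi => hfi i (fun h' => hnd.1 (h' ▸ hi)))
      rw [hfj, hl, mul_assoc]
    · have hj' : j ∈ l := by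
        rcases List.mem_cons.mp hj with h' | h'
        · exact absurd h'.symm hxj
        · exact h'
      rw [hfi x hxj, ih hnd.2 hj' (fun i hi hij => hc i (List.mem_cons_of_mem _ hi) hij) hfj hfi]
      have hcx : Commute c (h x) := hc x (List.mem_cons_self) hxj
      rw [← mul_assoc, ← hcx.eq, mul_assoc]

lemma L2 {Γ : Type*} [Group Γ] {ι : Type*} (c z : Γ) (h : ι → Γ) (j : ι) :
    ∀ l : List ι, l.Nodup → j ∈ l →
      (∀ i ∈ l, i ≠ j → Commute c (h i)) →
      c * h j = z * (h j * c) → (∀ i ∈ l, Commute z (h i)) →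
      c * (l.map h).prod = z * ((l.map h).prod * c) := by
  intro l
  induction l with
  | nil => simp
  | cons x l ih =>
    intro hnd hj hc hcz hz
    rw [List.nodup_cons] at hnd
    rw [List.map_cons, List.prod_cons]
    rcases eq_or_ne x j with rfl | hxj
    · have hcl : Commute c (l.map h).prod := by
        apply Commute.list_prod_right
        intro y hy
        obtain ⟨i, hi, rfl⟩ := List.mem_map.mp hy
        exact hc i (List.mem_cons_of_mem _ hi) (fun h' => hnd.1 (h' ▸ hi))
      calc c * (h x * (l.map h).prod) = (c * h x) * (l.map h).prod := (mul_assoc _ _ _).symm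
      _ = z * (h x * c) * (l.map h).prod := by rw [hcz]
      _ = z * (h x * (c * (l.map h).prod)) := by simp [mul_assoc]
      _ = z * (h x * ((l.map h).prod * c)) := by rw [hcl.eq]
      _ = z * (h x * (l.map h).prod * c) := by simp [mul_assoc]
    · have hj' : j ∈ l := by
        rcases List.mem_cons.mp hj with h' | h'
        · exact absurd h'.symm hxj
        · exact h'
      have hcx : Commute c (h x) := hc x (List.mem_cons_self) hxj
      have hzx : Commute z (h x) := hz x (List.mem_cons_self)
      calc c * (h x * (l.map h).prod) = (c * h x) * (l.map h).prod := (mul_assoc _ _ _).symm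
      _ = (h x * c) * (l.map h).prod := by rw [hcx.eq]
      _ = h x * (c * (l.map h).prod) := mul_assoc _ _ _
      _ = h x * (z * ((l.map h).prod * c)) := by
            rw [ih hnd.2 hj' (fun i hi hij => hc i (List.mem_cons_of_mem _ hi) hij) hcz
              (fun i hi => hz i (List.mem_cons_of_mem _ hi))]
      _ = (h x * z) * ((l.map h).prod * c) := (mul_assoc _ _ _).symm
      _ = (z * h x) * ((l.map h).prod * c) := by rw [← hzx.eq]
      _ = z * (h x * (l.map h).prod * c) := by simp [mul_assoc]

/-! ### The normal form -/

def PA (m mt : Fin g → ℤ) : PresentedGroup (rels11 g) :=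
  ((List.finRange g).map fun i => G (Gen11.a i) ^ m i * G (Gen11.at_ i) ^ mt i).prod

def PB (n nt : Fin g → ℤ) : PresentedGroup (rels11 g) :=
  ((List.finRange g).map fun i => G (Gen11.b i) ^ n i * G (Gen11.bt i) ^ nt i).prod

def nf (e : M g) : PresentedGroup (rels11 g) :=
  G (Gen11.sigma (g := g)) ^ e.p * G (Gen11.sigmat (g := g)) ^ e.q *
    G (Gen11.zeta (g := g)) ^ e.r * PA e.m e.mt * PB e.n e.nt

lemma PA_insert (j : Fin g) (m mt : Fin g → ℤ) :
    PA (Pi.single j 1 + m) mt = G (Gen11.a j) * PA m mt := by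
  apply L1 (c := G (Gen11.a j)) _ _ j _ (List.nodup_finRange g) (List.mem_finRange j)
  · intro i _ hij
    exact ((cAA j i).zpow_right _).mul_right ((cAAt j i).zpow_right _)
  · rw [Pi.add_apply, Pi.single_eq_same, zpow_add, zpow_one, mul_assoc]
  · intro i hij
    rw [Pi.add_apply, Pi.single_eq_of_ne hij, zero_add]

lemma PA_insert_t (j : Fin g) (m mt : Fin g → ℤ) :
    PA m (Pi.single j 1 + mt) = G (Gen11.at_ j) * PA m mt := by
  apply L1 (c := G (Gen11.at_ j)) _ _ j _ (List.nodup_finRange g) (List.mem_finRange j)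
  · intro i _ hij
    exact (((cAAt i j).symm).zpow_right _).mul_right ((cAtAt j i).zpow_right _)
  · rw [Pi.add_apply, Pi.single_eq_same, zpow_add, zpow_one]
    rw [← mul_assoc, ← (((cAAt j j).symm).zpow_right (m j)).eq, mul_assoc]
  · intro i hij
    rw [Pi.add_apply, Pi.single_eq_of_ne hij, zero_add]

lemma PB_insert (j : Fin g) (n nt : Fin g → ℤ) :
    PB (Pi.single j 1 + n) nt = G (Gen11.b j) * PB n nt := by
  apply L1 (c := G (Gen11.b j)) _ _ j _ (List.nodup_finRange g) (List.mem_finRange j)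
  · intro i _ hij
    exact ((cBB j i).zpow_right _).mul_right ((cBBt j i).zpow_right _)
  · rw [Pi.add_apply, Pi.single_eq_same, zpow_add, zpow_one, mul_assoc]
  · intro i hij
    rw [Pi.add_apply, Pi.single_eq_of_ne hij, zero_add]

lemma PB_insert_t (j : Fin g) (n nt : Fin g → ℤ) :
    PB n (Pi.single j 1 + nt) = G (Gen11.bt j) * PB n nt := by
  apply L1 (c := G (Gen11.bt j)) _ _ j _ (List.nodup_finRange g) (List.mem_finRange j)
  · intro i _ hij
    exact (((cBBt i j).symm).zpow_right _).mul_right ((cBtBt j i).zpow_right _)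
  · rw [Pi.add_apply, Pi.single_eq_same, zpow_add, zpow_one]
    rw [← mul_assoc, ← (((cBBt j j).symm).zpow_right (n j)).eq, mul_assoc]
  · intro i hij
    rw [Pi.add_apply, Pi.single_eq_of_ne hij, zero_add]

lemma PA_pass (j : Fin g) (m mt : Fin g → ℤ) :
    G (Gen11.b j) * PA m mt =
      ((G (Gen11.sigma (g := g))) ^ 2) ^ (-(m j)) * (G (Gen11.zeta (g := g))) ^ (-(mt j)) *
        (PA m mt * G (Gen11.b j)) := by
  apply L2 (c := G (Gen11.b j)) _ _ j _ (List.nodup_finRange g) (List.mem_finRange j)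
  · intro i _ hij
    exact ((cBA j i (Ne.symm hij)).zpow_right _).mul_right ((cBAt j i (Ne.symm hij)).zpow_right _)
  · exact pass_two (passBA j (m j)) (passBAt j (mt j)) (((cZ _).zpow_left _))
  · intro i _
    have h1 : Commute (((G (Gen11.sigma (g := g))) ^ 2) ^ (-(m j)))
        (G (Gen11.a i) ^ m i * G (Gen11.at_ i) ^ mt i) :=
      (((cS _).pow_left 2).zpow_left _)
    have h2 : Commute ((G (Gen11.zeta (g := g))) ^ (-(mt j)))
        (G (Gen11.a i) ^ m i * G (Gen11.at_ i) ^ mt i) := ((cZ _).zpow_left _)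
    exact h1.mul_left h2

lemma PA_pass_t (j : Fin g) (m mt : Fin g → ℤ) :
    G (Gen11.bt j) * PA m mt =
      (G (Gen11.zeta (g := g))) ^ (-(m j)) * ((G (Gen11.sigmat (g := g))) ^ 2) ^ (-(mt j)) *
        (PA m mt * G (Gen11.bt j)) := by
  apply L2 (c := G (Gen11.bt j)) _ _ j _ (List.nodup_finRange g) (List.mem_finRange j)
  · intro i _ hij
    exact ((cBtA j i (Ne.symm hij)).zpow_right _).mul_right ((cBtAt j i (Ne.symm hij)).zpow_right _)
  · exact pass_two (passBtA j (m j)) (passBtAt j (mt j)) ((((cT _).pow_left 2).zpow_left _))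
  · intro i _
    have h1 : Commute ((G (Gen11.zeta (g := g))) ^ (-(m j)))
        (G (Gen11.a i) ^ m i * G (Gen11.at_ i) ^ mt i) := ((cZ _).zpow_left _)
    have h2 : Commute (((G (Gen11.sigmat (g := g))) ^ 2) ^ (-(mt j)))
        (G (Gen11.a i) ^ m i * G (Gen11.at_ i) ^ mt i) :=
      (((cT _).pow_left 2).zpow_left _)
    exact h1.mul_left h2

/-! ### Shuffling lemmas -/

lemma sh {Γ : Type*} [Group Γ] {c u v : Γ} (h : Commute c u) : u * (c * v) = c * (u * v) := by
  rw [← mul_assoc, ← h.eq, mul_assoc]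

lemma sh' {Γ : Type*} [Group Γ] {c u v : Γ} (h : Commute c u) : c * (u * v) = u * (c * v) :=
  (sh h).symm

lemma sh4 {Γ : Type*} [Group Γ] {c u v x y : Γ} (h : Commute c u) :
    u * (c * v) * x * y = c * (u * v * x * y) := by
  rw [sh h]; simp [mul_assoc]

lemma sh5 {Γ : Type*} [Group Γ] {c u v w x y : Γ} (h : Commute c u) :
    u * (c * v) * w * x * y = c * (u * v * w * x * y) := by
  rw [sh h]; simp [mul_assoc]

lemma assemble_a {Γ : Type*} [Group Γ] {Aj X PAe PBe : Γ} (h : Commute Aj X) :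
    Aj * (X * PAe * PBe) = X * (Aj * PAe) * PBe := by
  calc Aj * (X * PAe * PBe) = Aj * (X * (PAe * PBe)) := by simp [mul_assoc]
  _ = X * (Aj * (PAe * PBe)) := sh' h
  _ = X * (Aj * PAe) * PBe := by simp [mul_assoc]

lemma assemble {Γ : Type*} [Group Γ] {Bj X PAe PBe zc Y : Γ}
    (hBX : Commute Bj X) (hpass : Bj * PAe = zc * (PAe * Bj)) (hXz : X * zc = Y) :
    Bj * (X * PAe * PBe) = Y * PAe * (Bj * PBe) := by
  calc Bj * (X * PAe * PBe) = Bj * (X * (PAe * PBe)) := by simp [mul_assoc]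
  _ = X * (Bj * (PAe * PBe)) := sh' hBX
  _ = X * ((Bj * PAe) * PBe) := by simp [mul_assoc]
  _ = X * ((zc * (PAe * Bj)) * PBe) := by rw [hpass]
  _ = (X * zc) * (PAe * (Bj * PBe)) := by simp [mul_assoc]
  _ = Y * PAe * (Bj * PBe) := by rw [hXz]; simp [mul_assoc]

/-! ### Combining central factors -/

lemma central_combine (p q r k l : ℤ) :
    G (Gen11.sigma (g := g)) ^ p * G (Gen11.sigmat (g := g)) ^ q * G (Gen11.zeta (g := g)) ^ r *
      (((G (Gen11.sigma (g := g))) ^ 2) ^ (-k) * (G (Gen11.zeta (g := g))) ^ (-l)) =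
    G (Gen11.sigma (g := g)) ^ (p - 2 * k) * G (Gen11.sigmat (g := g)) ^ q *
      G (Gen11.zeta (g := g)) ^ (r - l) := by
  have hS : ((G (Gen11.sigma (g := g))) ^ 2) ^ (-k) = G (Gen11.sigma (g := g)) ^ (-(2 * k)) := by
    rw [← zpow_natCast (G (Gen11.sigma (g := g))) 2, ← zpow_mul]
    norm_num
  rw [hS]
  have c1 : Commute (G (Gen11.zeta (g := g)) ^ r) (G (Gen11.sigma (g := g)) ^ (-(2 * k))) :=
    ((cZ _).zpow_left _)
  have c2 : Commute (G (Gen11.sigmat (g := g)) ^ q) (G (Gen11.sigma (g := g)) ^ (-(2 * k))) :=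
    ((cT _).zpow_left _)
  calc G (Gen11.sigma (g := g)) ^ p * G (Gen11.sigmat (g := g)) ^ q *
        G (Gen11.zeta (g := g)) ^ r *
        (G (Gen11.sigma (g := g)) ^ (-(2 * k)) * G (Gen11.zeta (g := g)) ^ (-l))
      = G (Gen11.sigma (g := g)) ^ p * G (Gen11.sigmat (g := g)) ^ q *
        (G (Gen11.zeta (g := g)) ^ r * G (Gen11.sigma (g := g)) ^ (-(2 * k))) *
        G (Gen11.zeta (g := g)) ^ (-l) := by simp [mul_assoc]
  _ = G (Gen11.sigma (g := g)) ^ p * G (Gen11.sigmat (g := g)) ^ q *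
        (G (Gen11.sigma (g := g)) ^ (-(2 * k)) * G (Gen11.zeta (g := g)) ^ r) *
        G (Gen11.zeta (g := g)) ^ (-l) := by rw [c1.eq]
  _ = G (Gen11.sigma (g := g)) ^ p *
        (G (Gen11.sigmat (g := g)) ^ q * G (Gen11.sigma (g := g)) ^ (-(2 * k))) *
        (G (Gen11.zeta (g := g)) ^ r * G (Gen11.zeta (g := g)) ^ (-l)) := by simp [mul_assoc]
  _ = G (Gen11.sigma (g := g)) ^ p *
        (G (Gen11.sigma (g := g)) ^ (-(2 * k)) * G (Gen11.sigmat (g := g)) ^ q) *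
        (G (Gen11.zeta (g := g)) ^ r * G (Gen11.zeta (g := g)) ^ (-l)) := by rw [c2.eq]
  _ = (G (Gen11.sigma (g := g)) ^ p * G (Gen11.sigma (g := g)) ^ (-(2 * k))) *
        G (Gen11.sigmat (g := g)) ^ q *
        (G (Gen11.zeta (g := g)) ^ r * G (Gen11.zeta (g := g)) ^ (-l)) := by simp [mul_assoc]
  _ = G (Gen11.sigma (g := g)) ^ (p + -(2 * k)) * G (Gen11.sigmat (g := g)) ^ q *
        G (Gen11.zeta (g := g)) ^ (r + -l) := by rw [← zpow_add, ← zpow_add]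
  _ = G (Gen11.sigma (g := g)) ^ (p - 2 * k) * G (Gen11.sigmat (g := g)) ^ q *
        G (Gen11.zeta (g := g)) ^ (r - l) := by
        rw [show p + -(2 * k) = p - 2 * k from by ring, show r + -l = r - l from by ring]

lemma central_combine_t (p q r k l : ℤ) :
    G (Gen11.sigma (g := g)) ^ p * G (Gen11.sigmat (g := g)) ^ q * G (Gen11.zeta (g := g)) ^ r *
      ((G (Gen11.zeta (g := g))) ^ (-k) * ((G (Gen11.sigmat (g := g))) ^ 2) ^ (-l)) =
    G (Gen11.sigma (g := g)) ^ p * G (Gen11.sigmat (g := g)) ^ (q - 2 * l) *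
      G (Gen11.zeta (g := g)) ^ (r - k) := by
  have hT : ((G (Gen11.sigmat (g := g))) ^ 2) ^ (-l) = G (Gen11.sigmat (g := g)) ^ (-(2 * l)) := by
    rw [← zpow_natCast (G (Gen11.sigmat (g := g))) 2, ← zpow_mul]
    norm_num
  rw [hT]
  have c1 : Commute (G (Gen11.zeta (g := g)) ^ (r + -k)) (G (Gen11.sigmat (g := g)) ^ (-(2 * l))) :=
    ((cZ _).zpow_left _)
  calc G (Gen11.sigma (g := g)) ^ p * G (Gen11.sigmat (g := g)) ^ q *
        G (Gen11.zeta (g := g)) ^ r *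
        (G (Gen11.zeta (g := g)) ^ (-k) * G (Gen11.sigmat (g := g)) ^ (-(2 * l)))
      = G (Gen11.sigma (g := g)) ^ p * G (Gen11.sigmat (g := g)) ^ q *
        ((G (Gen11.zeta (g := g)) ^ r * G (Gen11.zeta (g := g)) ^ (-k)) *
          G (Gen11.sigmat (g := g)) ^ (-(2 * l))) := by simp [mul_assoc]
  _ = G (Gen11.sigma (g := g)) ^ p * G (Gen11.sigmat (g := g)) ^ q *
        (G (Gen11.zeta (g := g)) ^ (r + -k) * G (Gen11.sigmat (g := g)) ^ (-(2 * l))) := by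
        rw [← zpow_add]
  _ = G (Gen11.sigma (g := g)) ^ p * G (Gen11.sigmat (g := g)) ^ q *
        (G (Gen11.sigmat (g := g)) ^ (-(2 * l)) * G (Gen11.zeta (g := g)) ^ (r + -k)) := by
        rw [c1.eq]
  _ = G (Gen11.sigma (g := g)) ^ p *
        (G (Gen11.sigmat (g := g)) ^ q * G (Gen11.sigmat (g := g)) ^ (-(2 * l))) *
        G (Gen11.zeta (g := g)) ^ (r + -k) := by simp [mul_assoc]
  _ = G (Gen11.sigma (g := g)) ^ p * G (Gen11.sigmat (g := g)) ^ (q + -(2 * l)) *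
        G (Gen11.zeta (g := g)) ^ (r + -k) := by rw [← zpow_add]
  _ = G (Gen11.sigma (g := g)) ^ p * G (Gen11.sigmat (g := g)) ^ (q - 2 * l) *
        G (Gen11.zeta (g := g)) ^ (r - k) := by
        rw [show q + -(2 * l) = q - 2 * l from by ring, show r + -k = r - k from by ring]

/-! ### The key step lemma -/

lemma key (t : Gen11 g) (e : M g) : nf (fmap t * e) = G t * nf e := by
  cases t with
  | sigma =>
    have hfe : fmap (Gen11.sigma (g := g)) * e = ⟨1 + e.p, e.q, e.r, e.m, e.mt, e.n, e.nt⟩ := by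
      ext <;> simp [fmap]
    rw [hfe]
    simp only [nf]
    rw [zpow_add, zpow_one]
    simp [mul_assoc]
  | sigmat =>
    have hfe : fmap (Gen11.sigmat (g := g)) * e = ⟨e.p, 1 + e.q, e.r, e.m, e.mt, e.n, e.nt⟩ := by
      ext <;> simp [fmap]
    rw [hfe]
    simp only [nf]
    rw [zpow_add, zpow_one, sh5 (cT (G (Gen11.sigma (g := g)) ^ e.p))]
  | zeta =>
    have hfe : fmap (Gen11.zeta (g := g)) * e = ⟨e.p, e.q, 1 + e.r, e.m, e.mt, e.n, e.nt⟩ := by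
      ext <;> simp [fmap]
    rw [hfe]
    simp only [nf]
    rw [zpow_add, zpow_one,
      sh4 (cZ (G (Gen11.sigma (g := g)) ^ e.p * G (Gen11.sigmat (g := g)) ^ e.q))]
  | a j =>
    have hfe : fmap (Gen11.a j) * e =
        ⟨e.p, e.q, e.r, Pi.single j 1 + e.m, e.mt, e.n, e.nt⟩ := by
      ext <;> simp [fmap]
    rw [hfe]
    simp only [nf]
    rw [PA_insert]
    have hAc : Commute (G (Gen11.a j))
        (G (Gen11.sigma (g := g)) ^ e.p * G (Gen11.sigmat (g := g)) ^ e.q *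
          G (Gen11.zeta (g := g)) ^ e.r) :=
      (((cS _).symm.zpow_right e.p).mul_right ((cT _).symm.zpow_right e.q)).mul_right
        ((cZ _).symm.zpow_right e.r)
    rw [assemble_a hAc]
  | at_ j =>
    have hfe : fmap (Gen11.at_ j) * e =
        ⟨e.p, e.q, e.r, e.m, Pi.single j 1 + e.mt, e.n, e.nt⟩ := by
      ext <;> simp [fmap]
    rw [hfe]
    simp only [nf]
    rw [PA_insert_t]
    have hAc : Commute (G (Gen11.at_ j))
        (G (Gen11.sigma (g := g)) ^ e.p * G (Gen11.sigmat (g := g)) ^ e.q *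
          G (Gen11.zeta (g := g)) ^ e.r) :=
      (((cS _).symm.zpow_right e.p).mul_right ((cT _).symm.zpow_right e.q)).mul_right
        ((cZ _).symm.zpow_right e.r)
    rw [assemble_a hAc]
  | b j =>
    have hfe : fmap (Gen11.b j) * e =
        ⟨e.p - 2 * e.m j, e.q, e.r - e.mt j, e.m, e.mt, Pi.single j 1 + e.n, e.nt⟩ := by
      ext <;> simp [fmap, sum_single_mul] <;> ring
    rw [hfe]
    simp only [nf]
    rw [PB_insert]
    have hBX : Commute (G (Gen11.b j))
        (G (Gen11.sigma (g := g)) ^ e.p * G (Gen11.sigmat (g := g)) ^ e.q *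
          G (Gen11.zeta (g := g)) ^ e.r) :=
      (((cS _).symm.zpow_right e.p).mul_right ((cT _).symm.zpow_right e.q)).mul_right
        ((cZ _).symm.zpow_right e.r)
    rw [assemble hBX (PA_pass j e.m e.mt) (central_combine e.p e.q e.r (e.m j) (e.mt j))]
  | bt j =>
    have hfe : fmap (Gen11.bt j) * e =
        ⟨e.p, e.q - 2 * e.mt j, e.r - e.m j, e.m, e.mt, e.n, Pi.single j 1 + e.nt⟩ := by
      ext <;> simp [fmap, sum_single_mul] <;> ring
    rw [hfe]
    simp only [nf]
    rw [PB_insert_t]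
    have hBX : Commute (G (Gen11.bt j))
        (G (Gen11.sigma (g := g)) ^ e.p * G (Gen11.sigmat (g := g)) ^ e.q *
          G (Gen11.zeta (g := g)) ^ e.r) :=
      (((cS _).symm.zpow_right e.p).mul_right ((cT _).symm.zpow_right e.q)).mul_right
        ((cZ _).symm.zpow_right e.r)
    rw [assemble hBX (PA_pass_t j e.m e.mt) (central_combine_t e.p e.q e.r (e.m j) (e.mt j))]

/-! ### The induction -/

lemma PA_zero : PA (g := g) 0 0 = 1 := by
  rw [PA]
  apply List.prod_eq_one
  intro x hx
  rw [List.mem_map] at hx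
  obtain ⟨i, _, rfl⟩ := hx
  simp

lemma PB_zero : PB (g := g) 0 0 = 1 := by
  rw [PB]
  apply List.prod_eq_one
  intro x hx
  rw [List.mem_map] at hx
  obtain ⟨i, _, rfl⟩ := hx
  simp

lemma nf_one : nf (1 : M g) = 1 := by
  rw [nf]
  simp [PA_zero, PB_zero]

lemma inv_step {y : PresentedGroup (rels11 g)} (ih : ∀ e, nf (phi y * e) = y * nf e) :
    ∀ e : M g, nf (phi y⁻¹ * e) = y⁻¹ * nf e := by
  intro e
  have h2 := ih ((phi y)⁻¹ * e)
  rw [mul_inv_cancel_left] at h2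
  rw [map_inv, eq_inv_mul_iff_mul_eq]
  exact h2.symm

lemma mul_step {y z : PresentedGroup (rels11 g)} (ihy : ∀ e, nf (phi y * e) = y * nf e)
    (ihz : ∀ e, nf (phi z * e) = z * nf e) :
    ∀ e : M g, nf (phi (y * z) * e) = (y * z) * nf e := by
  intro e
  rw [map_mul, mul_assoc, ihy, ihz, mul_assoc]

lemma nf_phi_mul (x : PresentedGroup (rels11 g)) : ∀ e : M g, nf (phi x * e) = x * nf e := by
  refine QuotientGroup.induction_on x ?_
  intro w
  induction w using FreeGroup.induction_on with
  | C1 =>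
    intro e
    show nf (phi 1 * e) = 1 * nf e
    rw [map_one, one_mul, one_mul]
  | of t =>
    intro e
    show nf (phi (G t) * e) = G t * nf e
    rw [phi_of]
    exact key t e
  | inv_of t ih =>
    intro e
    show nf (phi ((G t)⁻¹) * e) = (G t)⁻¹ * nf e
    exact inv_step (y := G t) ih e
  | mul y z ihy ihz =>
    intro e
    exact mul_step ihy ihz e

lemma x_eq_nf (x : PresentedGroup (rels11 g)) : x = nf (phi x) := by
  have h := nf_phi_mul x 1
  rw [mul_one, nf_one, mul_one] at h
  exact h.symm

/-! ### Computing `phi` on normal forms -/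

lemma single_mul (i : Fin g) (c : ℤ) :
    (fun x => c * Pi.single (M := fun _ : Fin g => ℤ) i 1 x) = Pi.single i c := by
  funext x
  rcases eq_or_ne x i with rfl | h
  · simp
  · simp [Pi.single_eq_of_ne h]

lemma phi_PA (m mt : Fin g → ℤ) : phi (PA m mt) = ⟨0, 0, 0, m, mt, 0, 0⟩ := by
  rw [PA, map_list_prod, List.map_map]
  have hF : (⇑phi ∘ fun i => G (Gen11.a i) ^ m i * G (Gen11.at_ i) ^ mt i) =
      fun i => (⟨0, 0, 0, Pi.single i (m i), Pi.single i (mt i), 0, 0⟩ : M g) := by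
    funext i
    simp only [Function.comp_apply, map_mul, map_zpow, phi_of]
    rw [M.zpow_right _ rfl rfl, M.zpow_right _ rfl rfl]
    ext x <;> simp [fmap, M.sc, Pi.single_apply, mul_ite]
  rw [hF, M.list_prod_right _ (fun i => ⟨rfl, rfl⟩)]
  dsimp only
  have hz : ((List.finRange g).map fun _ : Fin g => (0 : ℤ)).sum = 0 :=
    List.sum_eq_zero (by intro y hy; rw [List.mem_map] at hy; obtain ⟨i, _, rfl⟩ := hy; rfl)
  have hm : ∀ v : Fin g → ℤ, ((List.finRange g).map fun i => Pi.single i (v i)).sum = v :=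
    fun v => by rw [← Fin.sum_univ_def, Finset.univ_sum_single]
  simp only [hz, hm]

lemma phi_PB (n nt : Fin g → ℤ) : phi (PB n nt) = ⟨0, 0, 0, 0, 0, n, nt⟩ := by
  rw [PB, map_list_prod, List.map_map]
  have hF : (⇑phi ∘ fun i => G (Gen11.b i) ^ n i * G (Gen11.bt i) ^ nt i) =
      fun i => (⟨0, 0, 0, 0, 0, Pi.single i (n i), Pi.single i (nt i)⟩ : M g) := by
    funext i
    simp only [Function.comp_apply, map_mul, map_zpow, phi_of]
    rw [M.zpow_left _ rfl rfl, M.zpow_left _ rfl rfl]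
    ext x <;> simp [fmap, M.sc, Pi.single_apply, mul_ite]
  rw [hF, M.list_prod_left _ (fun i => ⟨rfl, rfl⟩)]
  dsimp only
  have hz : ((List.finRange g).map fun _ : Fin g => (0 : ℤ)).sum = 0 :=
    List.sum_eq_zero (by intro y hy; rw [List.mem_map] at hy; obtain ⟨i, _, rfl⟩ := hy; rfl)
  have hm : ∀ v : Fin g → ℤ, ((List.finRange g).map fun i => Pi.single i (v i)).sum = v :=
    fun v => by rw [← Fin.sum_univ_def, Finset.univ_sum_single]
  simp only [hz, hm]

lemma phi_nf (e : M g) : phi (nf e) = e := by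
  rw [nf]
  simp only [map_mul, map_zpow, phi_of]
  rw [phi_PA, phi_PB, M.zpow_right _ rfl rfl, M.zpow_right _ rfl rfl, M.zpow_right _ rfl rfl]
  ext <;> simp [fmap, M.sc]

end S11

/-- Every element of the presented group `H` has a unique expression
`σ^p σ̃^q ζ^r ∏ᵢ aᵢ^{mᵢ} ãᵢ^{m̃ᵢ} ∏ᵢ bᵢ^{nᵢ} b̃ᵢ^{ñᵢ}`. -/
theorem stmt_11 (g : ℕ) (hg : 1 ≤ g) (x : PresentedGroup (rels11 g)) :
    ∃! e : (ℤ × ℤ × ℤ) × (Fin g → ℤ) × (Fin g → ℤ) × (Fin g → ℤ) × (Fin g → ℤ),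
      x = (PresentedGroup.of (rels := rels11 g) Gen11.sigma) ^ e.1.1 *
          (PresentedGroup.of (rels := rels11 g) Gen11.sigmat) ^ e.1.2.1 *
          (PresentedGroup.of (rels := rels11 g) Gen11.zeta) ^ e.1.2.2 *
          ((List.finRange g).map
            (fun i => (PresentedGroup.of (rels := rels11 g) (Gen11.a i)) ^ e.2.1 i *
              (PresentedGroup.of (rels := rels11 g) (Gen11.at_ i)) ^ e.2.2.1 i)).prod *
          ((List.finRange g).map
            (fun i => (PresentedGroup.of (rels := rels11 g) (Gen11.b i)) ^ e.2.2.2.1 i *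
              (PresentedGroup.of (rels := rels11 g) (Gen11.bt i)) ^ e.2.2.2.2 i)).prod := by
  refine ⟨⟨⟨(S11.phi x).p, (S11.phi x).q, (S11.phi x).r⟩, (S11.phi x).m, (S11.phi x).mt,
    (S11.phi x).n, (S11.phi x).nt⟩, ?_, ?_⟩
  · show x = S11.nf (S11.phi x)
    exact S11.x_eq_nf x
  · rintro ⟨⟨p', q', r'⟩, m', mt', n', nt'⟩ he
    have he' : x = S11.nf (⟨p', q', r', m', mt', n', nt'⟩ : S11.M g) := he
    have h2 : (⟨p', q', r', m', mt', n', nt'⟩ : S11.M g) = S11.phi x := by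
      rw [he', S11.phi_nf]
    rw [← h2]
end
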